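/- arXiv:1706.02074 — 6 statements merged into one kernel-verified Lean document; each statement's English description precedes it below -/
import Mathlib

section
/- Assume b₀'(0) ≠ 0, let ε > 0 and let d : (−ε, ε) → ℝ be a smooth function with d(0) = 0 satisfying b₀(d(y)) + b₁(d(y))·y² + ½(b₃(d(y), y) + b₃(d(y), −y))·y⁴ = 0 for all |y| < ε. Define the image of the double point curve d̂(y) = φ(d(y), y). Then d̂'(0) = d̂'''(0) = (0,0,0), d̂''(0) = (−2b₁(0)/b₀'(0), 1, 0), and d̂⁽⁴⁾(0) = ( 12(−2b₃(0,0)b₀'(0)² + 2b₀'(0)b₁'(0)b₁(0) − b₁(0)²b₀''(0))/b₀'(0)³ , 12b₁(0)²a''(0)/b₀'(0)² , 0 ). -/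
open Real Set

open Filter Topology

private lemma s11_one_le : (1 : WithTop ℕ∞) ≤ ((⊤ : ℕ∞) : WithTop ℕ∞) := by
  exact_mod_cast le_top

private lemma s11_top_add : ((⊤ : ℕ∞) : WithTop ℕ∞) + 1 ≤ ((⊤ : ℕ∞) : WithTop ℕ∞) :=
  le_of_eq rfl

private lemma s11_evIter {F : Type*} [NormedAddCommGroup F] [NormedSpace ℝ F]
    {f g : ℝ → F} {x : ℝ} (h : f =ᶠ[nhds x] g) :
    ∀ n, iteratedDeriv n f x = iteratedDeriv n g x := by
  intro n
  induction n generalizing f g with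
  | zero => simpa using h.self_of_nhds
  | succ n ih => rw [iteratedDeriv_succ', iteratedDeriv_succ']; exact ih h.deriv

private lemma s11_derivEv {F : Type*} [NormedAddCommGroup F] [NormedSpace ℝ F]
    {s : Set ℝ} (hs : IsOpen s) {x : ℝ} (hx : x ∈ s) {f g : ℝ → F}
    (h : ∀ y ∈ s, HasDerivAt f (g y) y) : deriv f =ᶠ[nhds x] g :=
  Filter.eventually_of_mem (hs.mem_nhds hx) fun y hy => (h y hy).deriv

private lemma s11_iterStep {F : Type*} [NormedAddCommGroup F] [NormedSpace ℝ F]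
    {s : Set ℝ} (hs : IsOpen s) {x : ℝ} (hx : x ∈ s) {f g : ℝ → F}
    (h : ∀ y ∈ s, HasDerivAt f (g y) y) (n : ℕ) :
    iteratedDeriv (n + 1) f x = iteratedDeriv n g x := by
  rw [iteratedDeriv_succ']
  exact s11_evIter (s11_derivEv hs hx h) n

private lemma s11_chain4 {F : Type*} [NormedAddCommGroup F] [NormedSpace ℝ F]
    {s : Set ℝ} (hs : IsOpen s) {x : ℝ} (hx : x ∈ s) {f g1 g2 g3 g4 : ℝ → F}
    (h1 : ∀ y ∈ s, HasDerivAt f (g1 y) y) (h2 : ∀ y ∈ s, HasDerivAt g1 (g2 y) y)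
    (h3 : ∀ y ∈ s, HasDerivAt g2 (g3 y) y) (h4 : ∀ y ∈ s, HasDerivAt g3 (g4 y) y) :
    iteratedDeriv 1 f x = g1 x ∧ iteratedDeriv 2 f x = g2 x ∧
    iteratedDeriv 3 f x = g3 x ∧ iteratedDeriv 4 f x = g4 x := by
  refine ⟨?_, ?_, ?_, ?_⟩
  · rw [iteratedDeriv_one]; exact (h1 x hx).deriv
  · rw [show (2:ℕ) = 1+1 from rfl, s11_iterStep hs hx h1 1, iteratedDeriv_one]
    exact (h2 x hx).deriv
  · rw [show (3:ℕ) = 2+1 from rfl, s11_iterStep hs hx h1 2,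
      show (2:ℕ) = 1+1 from rfl, s11_iterStep hs hx h2 1, iteratedDeriv_one]
    exact (h3 x hx).deriv
  · rw [show (4:ℕ) = 3+1 from rfl, s11_iterStep hs hx h1 3,
      show (3:ℕ) = 2+1 from rfl, s11_iterStep hs hx h2 2,
      show (2:ℕ) = 1+1 from rfl, s11_iterStep hs hx h3 1, iteratedDeriv_one]
    exact (h4 x hx).deriv

private lemma s11_iterConst0 : ∀ (n : ℕ) (x : ℝ), iteratedDeriv n (fun _ : ℝ => (0:ℝ)) x = 0 := by
  intro n
  induction n with
  | zero => intro x; simp [iteratedDeriv_zero]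
  | succ n ih =>
    intro x
    rw [iteratedDeriv_succ']
    simpa using ih x

private lemma s11_hasDerivAt_of_contDiffOn {s : Set ℝ} (hs : IsOpen s) {g : ℝ → ℝ}
    (hg : ContDiffOn ℝ (⊤ : ℕ∞) g s) {y : ℝ} (hy : y ∈ s) :
    HasDerivAt g (deriv g y) y :=
  ((hg.differentiableOn (by simp)).differentiableAt (hs.mem_nhds hy)).hasDerivAt

private lemma s11_powStep {s : Set ℝ} (hs : IsOpen s) {g : ℝ → ℝ}
    (hg : ContDiffOn ℝ (⊤ : ℕ∞) g s) (k : ℕ) {y : ℝ} (hy : y ∈ s) :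
    HasDerivAt (fun z => z ^ (k + 1) * g z)
      ((fun z => z ^ k * (((k : ℝ) + 1) * g z + z * deriv g z)) y) y := by
  have h := (hasDerivAt_pow (k + 1) y).mul (s11_hasDerivAt_of_contDiffOn hs hg hy)
  refine h.congr_deriv ?_
  simp only [Nat.add_sub_cancel]
  push_cast
  ring

private lemma s11_powCD {s : Set ℝ} (hs : IsOpen s) {g : ℝ → ℝ}
    (hg : ContDiffOn ℝ (⊤ : ℕ∞) g s) (c : ℝ) :
    ContDiffOn ℝ (⊤ : ℕ∞) (fun z => c * g z + z * deriv g z) s :=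
  (contDiffOn_const.mul hg).add
    (contDiffOn_id.mul (hg.deriv_of_isOpen hs s11_top_add))

private lemma s11_powLt {s : Set ℝ} (hs : IsOpen s) (h0 : (0:ℝ) ∈ s) :
    ∀ (n k : ℕ) (g : ℝ → ℝ), ContDiffOn ℝ (⊤ : ℕ∞) g s → n ≤ k →
      iteratedDeriv n (fun z => z ^ (k + 1) * g z) 0 = 0 := by
  intro n
  induction n with
  | zero => intro k g hg _; simp [iteratedDeriv_zero]
  | succ n ih =>
    intro k g hg hnk
    obtain ⟨m, rfl⟩ : ∃ m, k = m + 1 := ⟨k - 1, by omega⟩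
    have hstep : ∀ y ∈ s, HasDerivAt (fun z => z ^ (m + 1 + 1) * g z)
        ((fun z => z ^ (m + 1) * ((((m+1 : ℕ) : ℝ) + 1) * g z + z * deriv g z)) y) y :=
      fun y hy => s11_powStep hs hg (m + 1) hy
    rw [s11_iterStep hs h0 hstep n]
    exact ih m _ (s11_powCD hs hg _) (by omega)

private lemma s11_powEq {s : Set ℝ} (hs : IsOpen s) (h0 : (0:ℝ) ∈ s) :
    ∀ (k : ℕ) (g : ℝ → ℝ), ContDiffOn ℝ (⊤ : ℕ∞) g s →
      iteratedDeriv k (fun z => z ^ k * g z) 0 = (Nat.factorial k : ℝ) * g 0 := by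
  intro k
  induction k with
  | zero => intro g hg; simp [iteratedDeriv_zero]
  | succ k ih =>
    intro g hg
    have hstep : ∀ y ∈ s, HasDerivAt (fun z => z ^ (k + 1) * g z)
        ((fun z => z ^ k * (((k : ℝ) + 1) * g z + z * deriv g z)) y) y :=
      fun y hy => s11_powStep hs hg k hy
    rw [s11_iterStep hs h0 hstep k, ih _ (s11_powCD hs hg _)]
    simp [Nat.factorial_succ]
    push_cast
    ring

private lemma s11_vec3 {f g h : ℝ → ℝ} {f' g' h' x : ℝ} (hf : HasDerivAt f f' x)
    (hg : HasDerivAt g g' x) (hh : HasDerivAt h h' x) :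
    HasDerivAt (fun y => (![f y, g y, h y] : Fin 3 → ℝ)) ![f', g', h'] x := by
  rw [hasDerivAt_pi]
  intro i
  fin_cases i
  · simpa using hf
  · simpa using hg
  · simpa using hh

private lemma s11_vecIter {s : Set ℝ} (hs : IsOpen s) :
    ∀ (n : ℕ) (f g h : ℝ → ℝ), ContDiffOn ℝ (⊤ : ℕ∞) f s → ContDiffOn ℝ (⊤ : ℕ∞) g s →
      ContDiffOn ℝ (⊤ : ℕ∞) h s → ∀ x ∈ s,
      iteratedDeriv n (fun y => (![f y, g y, h y] : Fin 3 → ℝ)) x =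
        ![iteratedDeriv n f x, iteratedDeriv n g x, iteratedDeriv n h x] := by
  intro n
  induction n with
  | zero =>
    intro f g h _ _ _ x hx
    simp [iteratedDeriv_zero]
  | succ n ih =>
    intro f g h hf hg hh x hx
    have hstep : ∀ y ∈ s, HasDerivAt (fun y => (![f y, g y, h y] : Fin 3 → ℝ))
        ((fun y => (![deriv f y, deriv g y, deriv h y] : Fin 3 → ℝ)) y) y :=
      fun y hy => s11_vec3 (s11_hasDerivAt_of_contDiffOn hs hf hy)
        (s11_hasDerivAt_of_contDiffOn hs hg hy) (s11_hasDerivAt_of_contDiffOn hs hh hy)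
    rw [s11_iterStep hs hx hstep n,
      ih (deriv f) (deriv g) (deriv h) (hf.deriv_of_isOpen hs s11_top_add)
        (hg.deriv_of_isOpen hs s11_top_add) (hh.deriv_of_isOpen hs s11_top_add) x hx]
    simp only [iteratedDeriv_succ']

private lemma s11_iterAdd {s : Set ℝ} (hs : IsOpen s) :
    ∀ (n : ℕ) (f g : ℝ → ℝ), ContDiffOn ℝ (⊤ : ℕ∞) f s → ContDiffOn ℝ (⊤ : ℕ∞) g s →
      ∀ x ∈ s, iteratedDeriv n (fun y => f y + g y) x =
        iteratedDeriv n f x + iteratedDeriv n g x := by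
  intro n
  induction n with
  | zero => intro f g _ _ x hx; simp [iteratedDeriv_zero]
  | succ n ih =>
    intro f g hf hg x hx
    have hstep : ∀ y ∈ s, HasDerivAt (fun y => f y + g y)
        ((fun y => deriv f y + deriv g y) y) y :=
      fun y hy => (s11_hasDerivAt_of_contDiffOn hs hf hy).add
        (s11_hasDerivAt_of_contDiffOn hs hg hy)
    rw [s11_iterStep hs hx hstep n,
      ih (deriv f) (deriv g) (hf.deriv_of_isOpen hs s11_top_add)
        (hg.deriv_of_isOpen hs s11_top_add) x hx]
    simp only [iteratedDeriv_succ']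

private lemma s11_iterDeriv_contDiffOn {s : Set ℝ} (hs : IsOpen s) {d : ℝ → ℝ}
    (hd : ContDiffOn ℝ (⊤ : ℕ∞) d s) (k : ℕ) : ContDiffOn ℝ (⊤ : ℕ∞) (deriv^[k] d) s := by
  induction k with
  | zero => exact hd
  | succ k ih => rw [Function.iterate_succ_apply']; exact ih.deriv_of_isOpen hs s11_top_add

private lemma s11_hasDerivAt_iter {s : Set ℝ} (hs : IsOpen s) {d : ℝ → ℝ}
    (hd : ContDiffOn ℝ (⊤ : ℕ∞) d s) (k : ℕ) {y : ℝ} (hy : y ∈ s) :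
    HasDerivAt (deriv^[k] d) (deriv^[k + 1] d y) y := by
  rw [Function.iterate_succ_apply']
  exact s11_hasDerivAt_of_contDiffOn hs (s11_iterDeriv_contDiffOn hs hd k) hy

private lemma s11_hasDerivAt_iterG {f : ℝ → ℝ} (hf : ContDiff ℝ (⊤ : ℕ∞) f) (k : ℕ) (x : ℝ) :
    HasDerivAt (deriv^[k] f) (deriv^[k + 1] f x) x := by
  rw [Function.iterate_succ_apply']
  exact (((ContDiff.iterate_deriv k hf).differentiable (by simp)).differentiableAt).hasDerivAt

private lemma s11_compChain {s : Set ℝ} (hs : IsOpen s) {d : ℝ → ℝ}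
    (hd : ContDiffOn ℝ (⊤ : ℕ∞) d s) (f : ℝ → ℝ) (hf : ContDiff ℝ (⊤ : ℕ∞) f) :
    (∀ y ∈ s, HasDerivAt (fun z => f (d z))
      ((fun z => deriv^[1] f (d z) * deriv^[1] d z) y) y) ∧
    (∀ y ∈ s, HasDerivAt (fun z => deriv^[1] f (d z) * deriv^[1] d z)
      ((fun z => deriv^[2] f (d z) * deriv^[1] d z ^ 2
        + deriv^[1] f (d z) * deriv^[2] d z) y) y) ∧
    (∀ y ∈ s, HasDerivAt (fun z => deriv^[2] f (d z) * deriv^[1] d z ^ 2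
        + deriv^[1] f (d z) * deriv^[2] d z)
      ((fun z => deriv^[3] f (d z) * deriv^[1] d z ^ 3
        + 3 * (deriv^[2] f (d z) * (deriv^[1] d z * deriv^[2] d z))
        + deriv^[1] f (d z) * deriv^[3] d z) y) y) ∧
    (∀ y ∈ s, HasDerivAt (fun z => deriv^[3] f (d z) * deriv^[1] d z ^ 3
        + 3 * (deriv^[2] f (d z) * (deriv^[1] d z * deriv^[2] d z))
        + deriv^[1] f (d z) * deriv^[3] d z)
      ((fun z => deriv^[4] f (d z) * deriv^[1] d z ^ 4
        + 6 * (deriv^[3] f (d z) * (deriv^[1] d z ^ 2 * deriv^[2] d z))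
        + 3 * (deriv^[2] f (d z) * deriv^[2] d z ^ 2)
        + 4 * (deriv^[2] f (d z) * (deriv^[1] d z * deriv^[3] d z))
        + deriv^[1] f (d z) * deriv^[4] d z) y) y) := by
  have hF : ∀ (k : ℕ), ∀ y ∈ s, HasDerivAt (fun z => deriv^[k] f (d z))
      (deriv^[k+1] f (d y) * deriv^[1] d y) y := by
    intro k y hy
    have h1 := s11_hasDerivAt_iterG hf k (d y)
    have h2 := s11_hasDerivAt_iter hs hd 0 hy
    simp only [Function.iterate_zero_apply] at h2
    exact h1.comp y h2
  have hD : ∀ (k : ℕ), ∀ y ∈ s, HasDerivAt (deriv^[k] d) (deriv^[k+1] d y) y :=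
    fun k y hy => s11_hasDerivAt_iter hs hd k hy
  refine ⟨?_, ?_, ?_, ?_⟩
  · intro y hy
    have := hF 0 y hy
    simpa using this
  · intro y hy
    have H := (hF 1 y hy).mul (hD 1 y hy)
    refine H.congr_deriv ?_
    norm_num
    ring
  · intro y hy
    have H := ((hF 2 y hy).mul ((hD 1 y hy).pow 2)).add ((hF 1 y hy).mul (hD 2 y hy))
    refine H.congr_deriv ?_
    norm_num
    ring
  · intro y hy
    have H := (((hF 3 y hy).mul ((hD 1 y hy).pow 3)).add
      (((hF 2 y hy).mul ((hD 1 y hy).mul (hD 2 y hy))).const_mul 3)).add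
      ((hF 1 y hy).mul (hD 3 y hy))
    refine H.congr_deriv ?_
    norm_num
    ring

private lemma s11_mulSq {s : Set ℝ} (hs : IsOpen s) (h0 : (0:ℝ) ∈ s)
    {u u1 u2 u3 u4 : ℝ → ℝ}
    (h1 : ∀ y ∈ s, HasDerivAt u (u1 y) y) (h2 : ∀ y ∈ s, HasDerivAt u1 (u2 y) y)
    (h3 : ∀ y ∈ s, HasDerivAt u2 (u3 y) y) (h4 : ∀ y ∈ s, HasDerivAt u3 (u4 y) y) :
    iteratedDeriv 1 (fun y => u y * y ^ 2) 0 = 0 ∧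
    iteratedDeriv 2 (fun y => u y * y ^ 2) 0 = 2 * u 0 ∧
    iteratedDeriv 3 (fun y => u y * y ^ 2) 0 = 6 * u1 0 ∧
    iteratedDeriv 4 (fun y => u y * y ^ 2) 0 = 12 * u2 0 := by
  have hm1 : ∀ y ∈ s, HasDerivAt (fun y => u y * y ^ 2)
      ((fun y => u1 y * y ^ 2 + u y * (2 * y)) y) y := by
    intro y hy
    have H := (h1 y hy).mul (hasDerivAt_pow 2 y)
    refine H.congr_deriv ?_
    norm_num
  have hm2 : ∀ y ∈ s, HasDerivAt (fun y => u1 y * y ^ 2 + u y * (2 * y))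
      ((fun y => u2 y * y ^ 2 + 4 * (u1 y * y) + 2 * u y) y) y := by
    intro y hy
    have H := ((h2 y hy).mul (hasDerivAt_pow 2 y)).add
      ((h1 y hy).mul ((hasDerivAt_id y).const_mul 2))
    refine H.congr_deriv ?_
    norm_num
    ring
  have hm3 : ∀ y ∈ s, HasDerivAt (fun y => u2 y * y ^ 2 + 4 * (u1 y * y) + 2 * u y)
      ((fun y => u3 y * y ^ 2 + 6 * (u2 y * y) + 6 * u1 y) y) y := by
    intro y hy
    have H := (((h3 y hy).mul (hasDerivAt_pow 2 y)).add
      (((h2 y hy).mul (hasDerivAt_id y)).const_mul 4)).add ((h1 y hy).const_mul 2)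
    refine H.congr_deriv ?_
    norm_num
    ring
  have hm4 : ∀ y ∈ s, HasDerivAt (fun y => u3 y * y ^ 2 + 6 * (u2 y * y) + 6 * u1 y)
      ((fun y => u4 y * y ^ 2 + 8 * (u3 y * y) + 12 * u2 y) y) y := by
    intro y hy
    have H := (((h4 y hy).mul (hasDerivAt_pow 2 y)).add
      (((h3 y hy).mul (hasDerivAt_id y)).const_mul 6)).add ((h2 y hy).const_mul 6)
    refine H.congr_deriv ?_
    norm_num
    ring
  obtain ⟨e1, e2, e3, e4⟩ := s11_chain4 hs h0 hm1 hm2 hm3 hm4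
  refine ⟨by simpa using e1, by rw [e2]; norm_num, by rw [e3]; norm_num, by rw [e4]; norm_num⟩


/-- Cross product of two vectors in ℝ³. -/
noncomputable def cross3 (a b : Fin 3 → ℝ) : Fin 3 → ℝ :=
  ![a 1 * b 2 - a 2 * b 1, a 2 * b 0 - a 0 * b 2, a 0 * b 1 - a 1 * b 0]

/-- Determinant of three vectors in ℝ³. -/
noncomputable def det3 (a b c : Fin 3 → ℝ) : ℝ :=
  Matrix.det (Matrix.of ![a, b, c])

/-- Euclidean norm on ℝ³. -/
noncomputable def norm3 (a : Fin 3 → ℝ) : ℝ :=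
  Real.sqrt (a 0 ^ 2 + a 1 ^ 2 + a 2 ^ 2)

/-- Euclidean inner product on ℝ³. -/
noncomputable def dot3 (a b : Fin 3 → ℝ) : ℝ :=
  a 0 * b 0 + a 1 * b 1 + a 2 * b 2

/-- With `d` parametrising the double point curve of the folded cuspidal
edge `φ` in the source, the image `d̂(y) = φ(d(y), y)` of the double point curve
satisfies `d̂'(0) = d̂'''(0) = 0`, `d̂''(0) = (−2b₁(0)/b₀'(0), 1, 0)`, and
`d̂⁗(0) = (12(−2b₃(0,0)b₀'(0)² + 2b₀'(0)b₁'(0)b₁(0) − b₁(0)²b₀''(0))/b₀'(0)³,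
12b₁(0)²a''(0)/b₀'(0)², 0)`. -/
theorem stmt11 (a b₀ b₁ b₂ : ℝ → ℝ) (b₃ : ℝ → ℝ → ℝ)
    (ha : ContDiff ℝ (⊤ : ℕ∞) a) (hb₀ : ContDiff ℝ (⊤ : ℕ∞) b₀)
    (hb₁ : ContDiff ℝ (⊤ : ℕ∞) b₁) (hb₂ : ContDiff ℝ (⊤ : ℕ∞) b₂)
    (hb₃ : ContDiff ℝ (⊤ : ℕ∞) (Function.uncurry b₃))
    (ha0 : a 0 = 0) (ha0' : deriv a 0 = 0) (hb₀0 : b₀ 0 = 0)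
    (hb₀0' : deriv b₀ 0 ≠ 0)
    (ε : ℝ) (hε : 0 < ε) (d : ℝ → ℝ)
    (hd : ContDiffOn ℝ (⊤ : ℕ∞) d (Set.Ioo (-ε) ε)) (hd0 : d 0 = 0)
    (hdeq : ∀ y ∈ Set.Ioo (-ε) ε,
      b₀ (d y) + b₁ (d y) * y ^ 2 +
        (1 / 2) * (b₃ (d y) y + b₃ (d y) (-y)) * y ^ 4 = 0)
    (φ : ℝ → ℝ → Fin 3 → ℝ)
    (hφ : ∀ x y, φ x y =
      ![x, a x + y ^ 2 / 2,
        (b₀ x + b₁ x * y ^ 2 + b₂ x * y ^ 3 + b₃ x y * y ^ 4) ^ 2])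
    (dh : ℝ → Fin 3 → ℝ) (hdh : ∀ y, dh y = φ (d y) y) :
    deriv dh 0 = 0 ∧
    iteratedDeriv 3 dh 0 = 0 ∧
    iteratedDeriv 2 dh 0 = ![-2 * b₁ 0 / deriv b₀ 0, 1, 0] ∧
    iteratedDeriv 4 dh 0 =
      ![12 * (-2 * b₃ 0 0 * deriv b₀ 0 ^ 2 + 2 * deriv b₀ 0 * deriv b₁ 0 * b₁ 0 -
            b₁ 0 ^ 2 * iteratedDeriv 2 b₀ 0) / deriv b₀ 0 ^ 3,
        12 * b₁ 0 ^ 2 * iteratedDeriv 2 a 0 / deriv b₀ 0 ^ 2, 0] := by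
  have hs : IsOpen (Set.Ioo (-ε) ε) := isOpen_Ioo
  have h0s : (0:ℝ) ∈ Set.Ioo (-ε) ε := ⟨by linarith, hε⟩
  -- chains for b₀∘d, b₁∘d, a∘d
  obtain ⟨hB1, hB2, hB3, hB4⟩ := s11_compChain hs hd b₀ hb₀
  obtain ⟨hK1, hK2, hK3, hK4⟩ := s11_compChain hs hd b₁ hb₁
  obtain ⟨hA1, hA2, hA3, hA4⟩ := s11_compChain hs hd a ha
  obtain ⟨hU1, hU2, hU3, hU4⟩ := s11_chain4 hs h0s hB1 hB2 hB3 hB4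
  obtain ⟨hW1, hW2, hW3, hW4⟩ := s11_chain4 hs h0s hA1 hA2 hA3 hA4
  obtain ⟨hV1, hV2, hV3, hV4⟩ := s11_mulSq hs h0s hK1 hK2 hK3 hK4
  simp only [Function.iterate_one, hd0] at hU1 hU2 hU3 hU4 hW1 hW2 hW3 hW4 hV1 hV2 hV3 hV4
  -- smoothness facts
  have hUcd : ContDiffOn ℝ (⊤:ℕ∞) (fun z => b₀ (d z)) (Set.Ioo (-ε) ε) := hb₀.comp_contDiffOn hd
  have hVcd : ContDiffOn ℝ (⊤:ℕ∞) (fun y => b₁ (d y) * y ^ 2) (Set.Ioo (-ε) ε) :=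
    (hb₁.comp_contDiffOn hd).mul (contDiffOn_id.pow 2)
  have hb3cd : ContDiffOn ℝ (⊤:ℕ∞) (fun y => b₃ (d y) y) (Set.Ioo (-ε) ε) :=
    hb₃.comp_contDiffOn (f := fun y => (d y, y)) (hd.prodMk contDiffOn_id)
  have hb3cd' : ContDiffOn ℝ (⊤:ℕ∞) (fun y => b₃ (d y) (-y)) (Set.Ioo (-ε) ε) :=
    hb₃.comp_contDiffOn (f := fun y => (d y, -y)) (hd.prodMk contDiffOn_id.neg)
  have hcCD : ContDiffOn ℝ (⊤:ℕ∞) (fun y => 1/2 * (b₃ (d y) y + b₃ (d y) (-y))) (Set.Ioo (-ε) ε) :=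
    contDiffOn_const.mul (hb3cd.add hb3cd')
  have hCtermCD : ContDiffOn ℝ (⊤:ℕ∞)
      (fun y => 1/2 * (b₃ (d y) y + b₃ (d y) (-y)) * y ^ 4) (Set.Ioo (-ε) ε) :=
    hcCD.mul (contDiffOn_id.pow 4)
  -- values of the c·y⁴ term
  have hC : ∀ n ≤ 3, iteratedDeriv n
      (fun y => 1/2 * (b₃ (d y) y + b₃ (d y) (-y)) * y ^ 4) 0 = 0 := by
    intro n hn
    have hCfun : (fun y => 1/2 * (b₃ (d y) y + b₃ (d y) (-y)) * y ^ 4)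
        = fun z => z ^ (3+1) * (1/2 * (b₃ (d z) z + b₃ (d z) (-z))) := by
      funext z; ring
    rw [hCfun]
    exact s11_powLt hs h0s n 3 _ hcCD hn
  have hC4 : iteratedDeriv 4 (fun y => 1/2 * (b₃ (d y) y + b₃ (d y) (-y)) * y ^ 4) 0
      = 24 * b₃ 0 0 := by
    have hCfun4 : (fun y => 1/2 * (b₃ (d y) y + b₃ (d y) (-y)) * y ^ 4)
        = fun z => z ^ 4 * (1/2 * (b₃ (d z) z + b₃ (d z) (-z))) := by
      funext z; ring
    rw [hCfun4, s11_powEq hs h0s 4 _ hcCD, hd0]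
    norm_num [Nat.factorial]
    ring
  -- the implicit equation has all derivatives zero
  have hH0 : ∀ n, iteratedDeriv n
      (fun y => b₀ (d y) + b₁ (d y) * y ^ 2 + 1 / 2 * (b₃ (d y) y + b₃ (d y) (-y)) * y ^ 4) 0
      = 0 := by
    intro n
    have hev : (fun y => b₀ (d y) + b₁ (d y) * y ^ 2
        + 1 / 2 * (b₃ (d y) y + b₃ (d y) (-y)) * y ^ 4) =ᶠ[nhds 0] (fun _ => (0:ℝ)) :=
      Filter.eventuallyEq_of_mem (hs.mem_nhds h0s) (fun y hy => hdeq y hy)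
    exact (s11_evIter hev n).trans (s11_iterConst0 n 0)
  have hsplitA : ∀ n, iteratedDeriv n (fun y => b₀ (d y) + b₁ (d y) * y ^ 2
        + 1 / 2 * (b₃ (d y) y + b₃ (d y) (-y)) * y ^ 4) 0
      = iteratedDeriv n (fun y => b₀ (d y) + b₁ (d y) * y ^ 2) 0
      + iteratedDeriv n (fun y => 1 / 2 * (b₃ (d y) y + b₃ (d y) (-y)) * y ^ 4) 0 :=
    fun n => s11_iterAdd hs n _ _ (hUcd.add hVcd) hCtermCD 0 h0s
  have hsplitB : ∀ n, iteratedDeriv n (fun y => b₀ (d y) + b₁ (d y) * y ^ 2) 0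
      = iteratedDeriv n (fun z => b₀ (d z)) 0 + iteratedDeriv n (fun y => b₁ (d y) * y ^ 2) 0 :=
    fun n => s11_iterAdd hs n _ _ hUcd hVcd 0 h0s
  have E : ∀ n, iteratedDeriv n (fun z => b₀ (d z)) 0
      + iteratedDeriv n (fun y => b₁ (d y) * y ^ 2) 0
      + iteratedDeriv n (fun y => 1 / 2 * (b₃ (d y) y + b₃ (d y) (-y)) * y ^ 4) 0 = 0 := by
    intro n
    have h := (hsplitA n).symm.trans (hH0 n)
    rw [hsplitB n] at h
    exact h
  -- extract the derivative values of d at 0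
  have hd1 : deriv d 0 = 0 := by
    have h := E 1
    rw [hU1, hV1, hC 1 (by norm_num)] at h
    have h' : deriv b₀ 0 * deriv d 0 = 0 := by linarith
    exact (mul_eq_zero.mp h').resolve_left hb₀0'
  have hE2 := E 2
  rw [hU2, hV2, hC 2 (by norm_num)] at hE2
  have hd2' : deriv b₀ 0 * deriv^[2] d 0 = -2 * b₁ 0 := by
    linear_combination hE2 + (-(deriv^[2] b₀ 0 * deriv d 0)) * hd1
  have hd2 : deriv^[2] d 0 = -2 * b₁ 0 / deriv b₀ 0 := by
    rw [eq_div_iff hb₀0']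
    linear_combination hd2'
  have hE3 := E 3
  rw [hU3, hV3, hC 3 (by norm_num)] at hE3
  have hd3 : deriv^[3] d 0 = 0 := by
    have h' : deriv b₀ 0 * deriv^[3] d 0 = 0 := by
      rw [hd1] at hE3
      linear_combination hE3
    exact (mul_eq_zero.mp h').resolve_left hb₀0'
  have hE4 := E 4
  rw [hU4, hV4, hC4] at hE4
  rw [hd1, hd3] at hE4
  have hd4 : deriv^[4] d 0 = 12 * (-2 * b₃ 0 0 * deriv b₀ 0 ^ 2
      + 2 * deriv b₀ 0 * deriv b₁ 0 * b₁ 0 - b₁ 0 ^ 2 * deriv^[2] b₀ 0) / deriv b₀ 0 ^ 3 := by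
    rw [eq_div_iff (pow_ne_zero 3 hb₀0')]
    linear_combination (deriv b₀ 0 ^ 2) * hE4
      + (-3 * deriv^[2] b₀ 0 * (deriv b₀ 0 * deriv^[2] d 0 - 2 * b₁ 0)
          - 12 * deriv b₁ 0 * deriv b₀ 0) * hd2'
  -- values of y^2/2
  have hq1 : ∀ y ∈ (Set.univ : Set ℝ), HasDerivAt (fun y : ℝ => y ^ 2 / 2) ((fun y : ℝ => y) y) y := by
    intro y _
    have h := (hasDerivAt_pow 2 y).div_const 2
    refine h.congr_deriv ?_
    norm_num
  have hq2 : ∀ y ∈ (Set.univ : Set ℝ), HasDerivAt (fun y : ℝ => y) ((fun _ : ℝ => (1:ℝ)) y) y :=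
    fun y _ => hasDerivAt_id y
  have hq3 : ∀ y ∈ (Set.univ : Set ℝ), HasDerivAt (fun _ : ℝ => (1:ℝ)) ((fun _ : ℝ => (0:ℝ)) y) y :=
    fun y _ => hasDerivAt_const y 1
  have hq4 : ∀ y ∈ (Set.univ : Set ℝ), HasDerivAt (fun _ : ℝ => (0:ℝ)) ((fun _ : ℝ => (0:ℝ)) y) y :=
    fun y _ => hasDerivAt_const y 0
  obtain ⟨hq1', hq2', hq3', hq4'⟩ := s11_chain4 isOpen_univ (Set.mem_univ (0:ℝ)) hq1 hq2 hq3 hq4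
  have hq1v : iteratedDeriv 1 (fun y : ℝ => y ^ 2 / 2) 0 = 0 := hq1'
  have hq2v : iteratedDeriv 2 (fun y : ℝ => y ^ 2 / 2) 0 = 1 := hq2'
  have hq3v : iteratedDeriv 3 (fun y : ℝ => y ^ 2 / 2) 0 = 0 := hq3'
  have hq4v : iteratedDeriv 4 (fun y : ℝ => y ^ 2 / 2) 0 = 0 := hq4'
  -- second component values
  have hsplitC1 : ∀ n, iteratedDeriv n (fun y => a (d y) + y ^ 2 / 2) 0
      = iteratedDeriv n (fun z => a (d z)) 0 + iteratedDeriv n (fun y : ℝ => y ^ 2 / 2) 0 :=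
    fun n => s11_iterAdd hs n _ _ (ha.comp_contDiffOn hd) ((contDiffOn_id.pow 2).div_const 2) 0 h0s
  have hc1v1 : iteratedDeriv 1 (fun y => a (d y) + y ^ 2 / 2) 0 = 0 := by
    rw [hsplitC1 1, hW1, hq1v, hd1]; ring
  have hc1v2 : iteratedDeriv 2 (fun y => a (d y) + y ^ 2 / 2) 0 = 1 := by
    rw [hsplitC1 2, hW2, hq2v, hd1, ha0']; ring
  have hc1v3 : iteratedDeriv 3 (fun y => a (d y) + y ^ 2 / 2) 0 = 0 := by
    rw [hsplitC1 3, hW3, hq3v, hd1, ha0']; ring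
  have hc1v4 : iteratedDeriv 4 (fun y => a (d y) + y ^ 2 / 2) 0
      = 12 * b₁ 0 ^ 2 * iteratedDeriv 2 a 0 / deriv b₀ 0 ^ 2 := by
    have ha2 : iteratedDeriv 2 a 0 = deriv^[2] a 0 := by rw [iteratedDeriv_eq_iterate]
    rw [hsplitC1 4, hW4, hq4v, hd1, hd3, ha0', ha2, eq_div_iff (pow_ne_zero 2 hb₀0')]
    linear_combination (3 * deriv^[2] a 0 * (deriv b₀ 0 * deriv^[2] d 0 - 2 * b₁ 0)) * hd2'
  -- third component values
  have hwCD : ContDiffOn ℝ (⊤:ℕ∞)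
      (fun y => (b₂ (d y) + (1/2 * b₃ (d y) y - 1/2 * b₃ (d y) (-y)) * y) ^ 2) (Set.Ioo (-ε) ε) :=
    ((hb₂.comp_contDiffOn hd).add
      (((contDiffOn_const.mul hb3cd).sub (contDiffOn_const.mul hb3cd')).mul contDiffOn_id)).pow 2
  have hc2ev : (fun y => (b₀ (d y) + b₁ (d y) * y ^ 2 + b₂ (d y) * y ^ 3 + b₃ (d y) y * y ^ 4) ^ 2)
      =ᶠ[nhds 0] (fun z => z ^ (5+1)
        * (b₂ (d z) + (1/2 * b₃ (d z) z - 1/2 * b₃ (d z) (-z)) * z) ^ 2) :=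
    Filter.eventuallyEq_of_mem (hs.mem_nhds h0s) (fun y hy => by
      have h := hdeq y hy
      linear_combination (b₀ (d y) + b₁ (d y) * y ^ 2 + b₂ (d y) * y ^ 3 + b₃ (d y) y * y ^ 4
        + y ^ 3 * (b₂ (d y) + (1/2 * b₃ (d y) y - 1/2 * b₃ (d y) (-y)) * y)) * h)
  have hc2v : ∀ n ≤ 5, iteratedDeriv n
      (fun y => (b₀ (d y) + b₁ (d y) * y ^ 2 + b₂ (d y) * y ^ 3 + b₃ (d y) y * y ^ 4) ^ 2) 0 = 0 :=
    fun n hn => (s11_evIter hc2ev n).trans (s11_powLt hs h0s n 5 _ hwCD hn)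
  -- assemble the vector
  have hc1CD : ContDiffOn ℝ (⊤:ℕ∞) (fun y => a (d y) + y ^ 2 / 2) (Set.Ioo (-ε) ε) :=
    (ha.comp_contDiffOn hd).add ((contDiffOn_id.pow 2).div_const 2)
  have hc2CD : ContDiffOn ℝ (⊤:ℕ∞)
      (fun y => (b₀ (d y) + b₁ (d y) * y ^ 2 + b₂ (d y) * y ^ 3 + b₃ (d y) y * y ^ 4) ^ 2)
      (Set.Ioo (-ε) ε) :=
    (((hUcd.add hVcd).add ((hb₂.comp_contDiffOn hd).mul (contDiffOn_id.pow 3))).add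
      (hb3cd.mul (contDiffOn_id.pow 4))).pow 2
  have hdh' : dh = fun y => (![d y, a (d y) + y ^ 2 / 2,
      (b₀ (d y) + b₁ (d y) * y ^ 2 + b₂ (d y) * y ^ 3 + b₃ (d y) y * y ^ 4) ^ 2] : Fin 3 → ℝ) := by
    funext y
    rw [hdh y, hφ]
  have hvec : ∀ n, iteratedDeriv n dh 0 = ![iteratedDeriv n d 0,
      iteratedDeriv n (fun y => a (d y) + y ^ 2 / 2) 0,
      iteratedDeriv n (fun y => (b₀ (d y) + b₁ (d y) * y ^ 2 + b₂ (d y) * y ^ 3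
        + b₃ (d y) y * y ^ 4) ^ 2) 0] := by
    intro n
    rw [hdh']
    exact s11_vecIter hs n _ _ _ hd hc1CD hc2CD 0 h0s
  have hdIter : ∀ n : ℕ, iteratedDeriv n d 0 = deriv^[n] d 0 := fun n => by
    rw [iteratedDeriv_eq_iterate]
  refine ⟨?_, ?_, ?_, ?_⟩
  · rw [← iteratedDeriv_one, hvec 1]
    funext i
    fin_cases i
    · simpa using (hdIter 1).trans (by simpa using hd1)
    · simpa using hc1v1
    · simpa using hc2v 1 (by norm_num)
  · rw [hvec 3]
    funext i
    fin_cases i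
    · simpa using (hdIter 3).trans hd3
    · simpa using hc1v3
    · simpa using hc2v 3 (by norm_num)
  · rw [hvec 2]
    funext i
    fin_cases i
    · simpa using (hdIter 2).trans hd2
    · simpa using hc1v2
    · simpa using hc2v 2 (by norm_num)
  · rw [hvec 4]
    funext i
    fin_cases i
    · simpa [show iteratedDeriv 2 b₀ 0 = deriv^[2] b₀ 0 from by rw [iteratedDeriv_eq_iterate]]
        using (hdIter 4).trans hd4
    · simpa using hc1v4
    · simpa using hc2v 4 (by norm_num)
end

section
/- Let h(u,v,w) = w² − u²v³, whose zero set X is the image of the standard cuspidal cross-cap (x,y) ↦ (x, y², xy³), and let ξ₁ = (3u, −2v, 0), ξ₂ = (0, 2v, 3w), ξ₃ = (0, 2w, 3u²v²), ξ₄ = (w, 0, uv³) be vector fields on ℝ³. Then for every open neighbourhood U of 0 in ℝ³, every smooth vector field ξ : U → ℝ³ and every smooth function λ : U → ℝ with ⟨ξ(p), ∇h(p)⟩ = λ(p)·h(p) for all p ∈ U, there exist an open neighbourhood V ⊆ U of 0 and smooth functions c₁, c₂, c₃, c₄ : V → ℝ such that ξ = c₁ξ₁ + c₂ξ₂ + c₃ξ₃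 + c₄ξ₄ on V. -/
open Real Set

open MeasureTheory
open scoped ContDiff
open scoped ContDiff
set_option synthInstance.maxHeartbeats 1000000
set_option maxHeartbeats 1000000

noncomputable def mu01 : Measure ℝ := volume.restrict (Set.Ioc 0 1)

instance : IsFiniteMeasure mu01 := by
  constructor
  rw [mu01, Measure.restrict_apply_univ, Real.volume_Ioc]
  norm_num

lemma mu01_ae_mem : ∀ᵐ a ∂mu01, a ∈ Set.Icc (0:ℝ) 1 := by
  rw [mu01]
  filter_upwards [ae_restrict_mem measurableSet_Ioc] with a ha
  exact Set.Ioc_subset_Icc_self ha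

lemma paramInt (n : ℕ) :
    ∀ {F : Type} [NormedAddCommGroup F] [NormedSpace ℝ F] [CompleteSpace F]
      (f : ℝ × (Fin 3 → ℝ) → F), ContDiff ℝ n f →
      ContDiff ℝ n (fun x : Fin 3 → ℝ => ∫ a, f (a, x) ∂mu01) := by
  induction n with
  | zero =>
    intro F _ _ _ f hf
    rw [show ((0:ℕ) : WithTop ℕ∞) = 0 from rfl, contDiff_zero] at *
    rw [continuous_iff_continuousAt]
    intro x₀
    obtain ⟨C, hC⟩ := (isCompact_Icc.prod (isCompact_closedBall x₀ 1)).exists_bound_of_continuousOn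
      (s := Set.Icc (0:ℝ) 1 ×ˢ Metric.closedBall x₀ 1) hf.continuousOn
    apply continuousAt_of_dominated (bound := fun _ => |C|)
    · filter_upwards with x
      exact (hf.comp (continuous_id.prodMk continuous_const)).aestronglyMeasurable
    · filter_upwards [Metric.closedBall_mem_nhds x₀ one_pos] with x hx
      filter_upwards [mu01_ae_mem] with a ha
      exact (hC (a, x) ⟨ha, hx⟩).trans (le_abs_self C)
    · exact integrable_const _
    · filter_upwards with a
      exact (hf.comp (continuous_const.prodMk continuous_id)).continuousAt
  | succ n ih =>
    intro F _ _ _ f hf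
    -- derivative in second variable
    set L : ((ℝ × (Fin 3 → ℝ)) →L[ℝ] F) →L[ℝ] ((Fin 3 → ℝ) →L[ℝ] F) :=
      (ContinuousLinearMap.compL ℝ (Fin 3 → ℝ) (ℝ × (Fin 3 → ℝ)) F).flip
        (ContinuousLinearMap.inr ℝ ℝ (Fin 3 → ℝ)) with hL
    have hf' : ContDiff ℝ n (fun q => L (fderiv ℝ f q)) :=
      L.contDiff.comp (hf.fderiv_right (by exact_mod_cast le_refl _))
    have hfd : ∀ (a : ℝ) (x : Fin 3 → ℝ),
        HasFDerivAt (fun y => f (a, y)) (L (fderiv ℝ f (a, x))) x := by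
      intro a x
      have h1 : HasFDerivAt f (fderiv ℝ f (a, x)) (a, x) :=
        (hf.differentiable (by simp) (a, x)).hasFDerivAt
      exact h1.comp x (hasFDerivAt_prodMk_right a x)
    have key : ∀ x₀ : Fin 3 → ℝ, HasFDerivAt (fun x => ∫ a, f (a, x) ∂mu01)
        (∫ a, L (fderiv ℝ f (a, x₀)) ∂mu01) x₀ := by
      intro x₀
      obtain ⟨C, hC⟩ := (isCompact_Icc.prod (isCompact_closedBall x₀ 1)).exists_bound_of_continuousOn
        (s := Set.Icc (0:ℝ) 1 ×ˢ Metric.closedBall x₀ 1)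
        (f := fun q => L (fderiv ℝ f q)) hf'.continuous.continuousOn
      apply hasFDerivAt_integral_of_dominated_of_fderiv_le (s := Metric.ball x₀ 1)
        (F := fun x a => f (a, x)) (F' := fun x a => L (fderiv ℝ f (a, x)))
        (bound := fun _ => |C|) (Metric.ball_mem_nhds x₀ one_pos)
      · filter_upwards with x
        exact ((hf.continuous.comp (continuous_id.prodMk continuous_const))).aestronglyMeasurable
      · obtain ⟨C', hC'⟩ := isCompact_Icc.exists_bound_of_continuousOn
          (s := Set.Icc (0:ℝ) 1) (f := fun a => f (a, x₀))
          (hf.continuous.comp (continuous_id.prodMk continuous_const)).continuousOn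
        apply Integrable.mono' (g := fun _ => |C'|) (integrable_const _)
          ((hf.continuous.comp (continuous_id.prodMk continuous_const))).aestronglyMeasurable
        filter_upwards [mu01_ae_mem] with a ha
        exact (hC' a ha).trans (le_abs_self C')
      · exact ((hf'.continuous.comp (continuous_id.prodMk continuous_const))).aestronglyMeasurable
      · filter_upwards [mu01_ae_mem] with a ha x hx
        exact (hC (a, x) ⟨ha, Metric.ball_subset_closedBall hx⟩).trans (le_abs_self C)
      · exact integrable_const _
      · filter_upwards with a x _
        exact hfd a x
    rw [show ((n+1:ℕ) : WithTop ℕ∞) = (n : WithTop ℕ∞) + 1 from by push_cast; rfl,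
      contDiff_succ_iff_fderiv]
    refine ⟨fun x => ⟨_, key x⟩, by simp, ?_⟩
    have heq : (fderiv ℝ fun x => ∫ a, f (a, x) ∂mu01)
        = fun x => ∫ a, L (fderiv ℝ f (a, x)) ∂mu01 := funext fun x => (key x).fderiv
    rw [heq]
    exact ih _ hf'

noncomputable def zc (i : Fin 3) (p : Fin 3 → ℝ) : Fin 3 → ℝ := p - p i • (Pi.single i 1 : Fin 3 → ℝ)

lemma hadamard (i : Fin 3) (f : (Fin 3 → ℝ) → ℝ) (hf : ContDiff ℝ ∞ f) :
    ∃ g : (Fin 3 → ℝ) → ℝ, ContDiff ℝ ∞ g ∧ ∀ p, f p = f (zc i p) + p i * g p := by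
  classical
  set s : Fin 3 → ℝ := Pi.single i 1 with hs
  set D : (Fin 3 → ℝ) → ℝ := fun p => fderiv ℝ f p s with hD
  have hDsm : ContDiff ℝ ∞ D :=
    (ContinuousLinearMap.apply ℝ ℝ s).contDiff.comp (contDiff_infty_iff_fderiv.mp hf).2
  set σ : ℝ × (Fin 3 → ℝ) → Fin 3 → ℝ := fun q => q.2 + ((q.1 - 1) * q.2 i) • s with hσ
  have hσsm : ContDiff ℝ ∞ σ := by
    apply contDiff_snd.add
    exact (((contDiff_fst.sub contDiff_const)).mul
      (((ContinuousLinearMap.proj (R := ℝ) (φ := fun _ : Fin 3 => ℝ) i).comp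
        (ContinuousLinearMap.snd ℝ ℝ _)).contDiff)).smul contDiff_const
  have hcomp : ContDiff ℝ ∞ (fun q : ℝ × (Fin 3 → ℝ) => D (σ q)) := hDsm.comp hσsm
  refine ⟨fun p => ∫ a, D (σ (a, p)) ∂mu01, ?_, ?_⟩
  · exact contDiff_infty.mpr fun n => paramInt n _ (hcomp.of_le (by exact_mod_cast le_top))
  · intro p
    have key : ∀ t : ℝ, HasDerivAt (fun t => f (σ (t, p))) (p i * D (σ (t, p))) t := by
      intro t
      have h1 : HasDerivAt (fun t : ℝ => (t - 1) * p i) (p i) t := by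
        simpa using ((hasDerivAt_id t).sub_const 1).mul_const (p i)
      have h3 : HasDerivAt (fun t : ℝ => σ (t, p)) (p i • s) t :=
        (h1.smul_const s).const_add p
      have h4 := ((hf.differentiable (by norm_num) (σ (t, p))).hasFDerivAt).comp_hasDerivAt t h3
      have h5 : fderiv ℝ f (σ (t, p)) (p i • s) = p i * D (σ (t, p)) := by
        rw [_root_.map_smul]; rfl
      rw [h5] at h4
      exact h4
    have hcont : Continuous fun t : ℝ => p i * D (σ (t, p)) := by
      apply continuous_const.mul
      exact hDsm.continuous.comp (hσsm.continuous.comp (continuous_id.prodMk continuous_const))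
    have h6 := intervalIntegral.integral_eq_sub_of_hasDerivAt (a := 0) (b := 1)
      (fun t _ => key t) (hcont.intervalIntegrable 0 1)
    have hσ1 : σ (1, p) = p := by simp [hσ]
    have hσ0 : σ (0, p) = zc i p := by
      simp only [hσ, zc]
      rw [show ((0:ℝ) - 1) * p i = -(p i) by ring, neg_smul, ← sub_eq_add_neg]
    rw [hσ1, hσ0, intervalIntegral.integral_const_mul] at h6
    have h7 : ∫ t in (0:ℝ)..1, D (σ (t, p)) = ∫ a, D (σ (a, p)) ∂mu01 := by
      rw [intervalIntegral.integral_of_le zero_le_one]; rfl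
    rw [h7] at h6
    linarith

lemma Zlem {G : ℝ → ℝ} (hG : ContinuousAt G 0) {S : Set ℝ} (hS : S.Finite)
    (hev : ∀ᶠ t in nhds 0, t ∉ S → G t = 0) : G 0 = 0 := by
  have hd : Dense Sᶜ := Set.Countable.dense_compl ℝ hS.countable
  have hne : (nhdsWithin (0:ℝ) Sᶜ).NeBot :=
    mem_closure_iff_nhdsWithin_neBot.mp (hd 0)
  have h1 : Filter.Tendsto G (nhdsWithin 0 Sᶜ) (nhds (G 0)) :=
    (hG.continuousWithinAt : ContinuousWithinAt G Sᶜ 0)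
  have h3 : ∀ᶠ t in nhdsWithin (0:ℝ) Sᶜ, G t = 0 := by
    filter_upwards [hev.filter_mono nhdsWithin_le_nhds, self_mem_nhdsWithin] with t h ht
    exact h ht
  have h2 : Filter.Tendsto G (nhdsWithin 0 Sᶜ) (nhds 0) := by
    refine Filter.Tendsto.congr' ?_ (tendsto_const_nhds (α := ℝ) (x := 0))
    filter_upwards [h3] with t ht
    exact ht.symm
  exact tendsto_nhds_unique h1 h2

lemma zc_apply (i : Fin 3) (p : Fin 3 → ℝ) (j : Fin 3) :
    zc i p j = if j = i then 0 else p j := by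
  simp only [zc, Pi.sub_apply, Pi.smul_apply, Pi.single_apply, smul_eq_mul]
  by_cases h : j = i <;> simp [h]

lemma zc_smooth (i : Fin 3) : ContDiff ℝ ∞ (zc i) := by
  unfold zc
  exact contDiff_id.sub
    (((ContinuousLinearMap.proj (R := ℝ) (φ := fun _ : Fin 3 => ℝ) i).contDiff).smul contDiff_const)

lemma zc_idem (i : Fin 3) (p : Fin 3 → ℝ) : zc i (zc i p) = zc i p := by
  funext j; simp [zc_apply]
  intro h; simp [h]

lemma zc_comm (i k : Fin 3) (p : Fin 3 → ℝ) : zc i (zc k p) = zc k (zc i p) := by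
  funext j; simp only [zc_apply]
  by_cases h1 : j = i <;> by_cases h2 : j = k <;> simp [h1, h2]

lemma zc_mem_ball {r : ℝ} (i : Fin 3) {p : Fin 3 → ℝ}
    (hp : p ∈ Metric.ball (0 : Fin 3 → ℝ) r) : zc i p ∈ Metric.ball (0 : Fin 3 → ℝ) r := by
  rw [mem_ball_zero_iff] at hp ⊢
  refine lt_of_le_of_lt ?_ hp
  refine (pi_norm_le_iff_of_nonneg (norm_nonneg p)).mpr fun j => ?_
  rw [zc_apply]
  by_cases h : j = i
  · simp [h, norm_nonneg]
  · simpa [h] using norm_le_pi_norm p j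

lemma zc_eq_self {i : Fin 3} {p : Fin 3 → ℝ} (h : p i = 0) : zc i p = p := by
  funext j; rw [zc_apply]
  by_cases hj : j = i
  · rw [if_pos hj, hj, h]
  · rw [if_neg hj]

lemma extend_smooth {U : Set (Fin 3 → ℝ)} (hU : IsOpen U) (c : ContDiffBump (0 : Fin 3 → ℝ))
    (hsupp : Metric.closedBall 0 c.rOut ⊆ U) {f : (Fin 3 → ℝ) → ℝ}
    (hf : ContDiffOn ℝ ∞ f U) : ContDiff ℝ ∞ (fun p => c p * f p) := by
  rw [contDiff_iff_contDiffAt]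
  intro p
  by_cases hp : p ∈ U
  · exact (c.contDiff.contDiffAt).mul (hf.contDiffAt (hU.mem_nhds hp))
  · have hp' : p ∉ tsupport (c : (Fin 3 → ℝ) → ℝ) := fun h => hp (hsupp (c.tsupport_eq ▸ h))
    have hev : (fun q => c q * f q) =ᶠ[nhds p] (fun _ => 0) := by
      filter_upwards [notMem_tsupport_iff_eventuallyEq.mp hp'] with q hq
      simp [hq]
    exact (contDiffAt_const (c := (0:ℝ))).congr_of_eventuallyEq hev

lemma shift_mem_eventually {B : Set (Fin 3 → ℝ)} (hB : IsOpen B) {p : Fin 3 → ℝ}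
    (hp : p ∈ B) (d : Fin 3 → ℝ) : ∀ᶠ t : ℝ in nhds 0, p + t • d ∈ B := by
  have hc : Continuous fun t : ℝ => p + t • d := by continuity
  have ht : Filter.Tendsto (fun t : ℝ => p + t • d) (nhds 0) (nhds p) := by
    simpa using hc.tendsto 0
  exact ht.eventually (hB.eventually_mem hp)



/-- Let `h(u,v,w) = w² − u²v³` (whose zero set is the image of the
standard cuspidal cross-cap) and let `ξ₁ = (3u, −2v, 0)`, `ξ₂ = (0, 2v, 3w)`,
`ξ₃ = (0, 2w, 3u²v²)`, `ξ₄ = (w, 0, uv³)`. Every smooth vector field `ξ` defined near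
`0` which is tangent to `X` (i.e. `⟨ξ, ∇h⟩ = λ·h` for some smooth `λ`) is, on some
neighbourhood of `0`, a combination `c₁ξ₁ + c₂ξ₂ + c₃ξ₃ + c₄ξ₄` with smooth
coefficients. -/
theorem stmt12
    (h : (Fin 3 → ℝ) → ℝ) (hh : ∀ p, h p = p 2 ^ 2 - p 0 ^ 2 * p 1 ^ 3)
    (gradh : (Fin 3 → ℝ) → Fin 3 → ℝ)
    (hgradh : ∀ p, gradh p = ![-2 * p 0 * p 1 ^ 3, -3 * p 0 ^ 2 * p 1 ^ 2, 2 * p 2])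
    (ξ₁ ξ₂ ξ₃ ξ₄ : (Fin 3 → ℝ) → Fin 3 → ℝ)
    (hξ₁ : ∀ p, ξ₁ p = ![3 * p 0, -2 * p 1, 0])
    (hξ₂ : ∀ p, ξ₂ p = ![0, 2 * p 1, 3 * p 2])
    (hξ₃ : ∀ p, ξ₃ p = ![0, 2 * p 2, 3 * p 0 ^ 2 * p 1 ^ 2])
    (hξ₄ : ∀ p, ξ₄ p = ![p 2, 0, p 0 * p 1 ^ 3]) :
    ∀ U : Set (Fin 3 → ℝ), IsOpen U → (0 : Fin 3 → ℝ) ∈ U →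
    ∀ ξ : (Fin 3 → ℝ) → Fin 3 → ℝ, ContDiffOn ℝ (⊤ : ℕ∞) ξ U →
    ∀ lam : (Fin 3 → ℝ) → ℝ, ContDiffOn ℝ (⊤ : ℕ∞) lam U →
    (∀ p ∈ U, dot3 (ξ p) (gradh p) = lam p * h p) →
    ∃ V : Set (Fin 3 → ℝ), IsOpen V ∧ (0 : Fin 3 → ℝ) ∈ V ∧ V ⊆ U ∧
    ∃ c₁ c₂ c₃ c₄ : (Fin 3 → ℝ) → ℝ,
      ContDiffOn ℝ (⊤ : ℕ∞) c₁ V ∧ ContDiffOn ℝ (⊤ : ℕ∞) c₂ V ∧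
      ContDiffOn ℝ (⊤ : ℕ∞) c₃ V ∧ ContDiffOn ℝ (⊤ : ℕ∞) c₄ V ∧
      ∀ p ∈ V, ξ p = c₁ p • ξ₁ p + c₂ p • ξ₂ p + c₃ p • ξ₃ p + c₄ p • ξ₄ p := by
  intro U hU hU0 ξ hξ lam hlam htan
  obtain ⟨ε, hε, hballU⟩ := Metric.isOpen_iff.mp hU 0 hU0
  set bump : ContDiffBump (0 : Fin 3 → ℝ) :=
    ⟨ε/3, 2*ε/3, by positivity, by linarith⟩ with hbump
  have hsupp : Metric.closedBall (0 : Fin 3 → ℝ) bump.rOut ⊆ U := by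
    refine subset_trans ?_ hballU
    intro q hq
    rw [Metric.mem_closedBall] at hq
    rw [Metric.mem_ball]
    calc dist q 0 ≤ 2*ε/3 := hq
      _ < ε := by linarith
  have hξ' : ContDiffOn ℝ ∞ ξ U := hξ
  have hlam' : ContDiffOn ℝ ∞ lam U := hlam
  set B : Set (Fin 3 → ℝ) := Metric.ball 0 (ε/3) with hB
  have hBopen : IsOpen B := Metric.isOpen_ball
  have hB0 : (0 : Fin 3 → ℝ) ∈ B := by
    rw [hB, Metric.mem_ball, dist_self]; positivity
  have hBU : B ⊆ U := by
    refine subset_trans ?_ hballU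
    intro q hq
    rw [hB, Metric.mem_ball] at hq
    rw [Metric.mem_ball]
    linarith [hq]
  have hbump1 : ∀ p ∈ B, bump p = 1 := by
    intro p hp
    exact bump.one_of_mem_closedBall (Metric.ball_subset_closedBall hp)
  -- global smooth versions of the components and lam
  set ta : (Fin 3 → ℝ) → ℝ := fun p => bump p * ξ p 0 with hta_def
  set tb : (Fin 3 → ℝ) → ℝ := fun p => bump p * ξ p 1 with htb_def
  set tc : (Fin 3 → ℝ) → ℝ := fun p => bump p * ξ p 2 with htc_def
  set tl : (Fin 3 → ℝ) → ℝ := fun p => bump p * lam p with htl_def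
  have proj_smooth : ∀ j : Fin 3, ContDiffOn ℝ ∞ (fun p => ξ p j) U := fun j =>
    (ContinuousLinearMap.proj (R := ℝ) (φ := fun _ : Fin 3 => ℝ) j).contDiff.comp_contDiffOn hξ'
  have hta : ContDiff ℝ ∞ ta := extend_smooth hU bump hsupp (proj_smooth 0)
  have htb : ContDiff ℝ ∞ tb := extend_smooth hU bump hsupp (proj_smooth 1)
  have htc : ContDiff ℝ ∞ tc := extend_smooth hU bump hsupp (proj_smooth 2)
  have htl : ContDiff ℝ ∞ tl := extend_smooth hU bump hsupp hlam'
  -- tangency on B in terms of the global functions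
  have htanB : ∀ p ∈ B, -2*p 0*p 1^3 * ta p - 3*p 0^2*p 1^2 * tb p + 2*p 2*tc p
      = tl p * (p 2^2 - p 0^2*p 1^3) := by
    intro p hp
    have h1 := htan p (hBU hp)
    rw [hh, hgradh] at h1
    simp only [dot3] at h1
    simp only [hta_def, htb_def, htc_def, htl_def, hbump1 p hp, one_mul]
    simp only [Matrix.cons_val_zero, Matrix.cons_val_one, Matrix.head_cons] at h1
    have h2 : (![(-2:ℝ) * p 0 * p 1 ^ 3, -3 * p 0 ^ 2 * p 1 ^ 2, 2 * p 2] : Fin 3 → ℝ) 2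
        = 2 * p 2 := rfl
    rw [h2] at h1
    linarith [h1]
  -- Hadamard decompositions
  obtain ⟨lam1, hlam1sm, hlam1⟩ := hadamard 2 tl htl
  obtain ⟨a1, ha1sm, ha1⟩ := hadamard 2 ta hta
  obtain ⟨b1, hb1sm, hb1⟩ := hadamard 2 tb htb
  obtain ⟨A0, hA0sm, hA0⟩ := hadamard 0 (fun p => ta (zc 2 p)) (hta.comp (zc_smooth 2))
  set A : (Fin 3 → ℝ) → ℝ := fun p => A0 (zc 2 p) with hA_def
  have hAsm : ContDiff ℝ ∞ A := hA0sm.comp (zc_smooth 2)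
  have hAz : ∀ p, A (zc 2 p) = A p := by
    intro p
    simp only [hA_def]
    rw [zc_idem]
  -- basic coordinates
  have hzc20 : ∀ p : Fin 3 → ℝ, zc 2 p 0 = p 0 := fun p => by
    rw [zc_apply, if_neg (by decide)]
  have hzc21 : ∀ p : Fin 3 → ℝ, zc 2 p 1 = p 1 := fun p => by
    rw [zc_apply, if_neg (by decide)]
  have hzc22 : ∀ p : Fin 3 → ℝ, zc 2 p 2 = 0 := fun p => by
    rw [zc_apply, if_pos rfl]
  have hBzc : ∀ i : Fin 3, ∀ p ∈ B, zc i p ∈ B := fun i p hp => zc_mem_ball i hp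
  -- the slice identity P
  set Pf : (Fin 3 → ℝ) → ℝ := fun q => 2*q 1*ta q + 3*q 0*tb q - tl q*q 0*q 1 with hPf_def
  have hPfc : Continuous Pf := by
    apply Continuous.sub
    · exact ((continuous_const.mul (continuous_apply 1)).mul hta.continuous).add
        ((continuous_const.mul (continuous_apply 0)).mul htb.continuous)
    · exact (htl.continuous.mul (continuous_apply 0)).mul (continuous_apply 1)
  have stage1 : ∀ p ∈ B, p 2 = 0 → Pf p = 0 := by
    intro p hp hp2
    set d : Fin 3 → ℝ := fun j => if j = 2 then 0 else 1 with hd_def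
    have hGc : ContinuousAt (fun t : ℝ => Pf (p + t • d)) 0 := by
      apply Continuous.continuousAt
      exact hPfc.comp (continuous_const.add (continuous_id.smul continuous_const))
    have hfin : (({-p 0, -p 1} : Set ℝ)).Finite :=
      (Set.finite_singleton _).insert _
    have hev : ∀ᶠ t : ℝ in nhds 0, t ∉ ({-p 0, -p 1} : Set ℝ) → Pf (p + t • d) = 0 := by
      filter_upwards [shift_mem_eventually hBopen hp d] with t htB htS
      set q : Fin 3 → ℝ := p + t • d with hq_def
      have hq0 : q 0 = p 0 + t := by simp [hq_def, hd_def]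
      have hq1 : q 1 = p 1 + t := by simp [hq_def, hd_def]
      have hq2 : q 2 = 0 := by simp [hq_def, hd_def, hp2]
      have ht0 : q 0 ≠ 0 := by
        rw [hq0]; intro hc
        exact htS (by rw [Set.mem_insert_iff]; left; linarith)
      have ht1 : q 1 ≠ 0 := by
        rw [hq1]; intro hc
        refine htS ?_
        rw [Set.mem_insert_iff, Set.mem_singleton_iff]
        right; linarith
      have h1 := htanB q htB
      rw [hq2] at h1
      have hfac : q 0 * q 1^2 * Pf q = 0 := by
        simp only [hPf_def]
        linear_combination -h1
      rcases mul_eq_zero.mp hfac with hc | hc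
      · exact absurd hc (by
          intro hc
          rcases mul_eq_zero.mp hc with h' | h'
          · exact ht0 h'
          · exact ht1 (pow_eq_zero_iff (n := 2) (by norm_num) |>.mp h'))
      · exact hc
    have := Zlem hGc hfin hev
    simpa using this
  have stage2 : ∀ q ∈ B, q 0 = 0 → q 2 = 0 → ta q = 0 := by
    intro q hq hq0 hq2
    set d : Fin 3 → ℝ := fun j => if j = 1 then 1 else 0 with hd_def
    have hGc : ContinuousAt (fun t : ℝ => ta (q + t • d)) 0 := by
      apply Continuous.continuousAt
      exact hta.continuous.comp (continuous_const.add (continuous_id.smul continuous_const))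
    have hev : ∀ᶠ t : ℝ in nhds 0, t ∉ ({-q 1} : Set ℝ) → ta (q + t • d) = 0 := by
      filter_upwards [shift_mem_eventually hBopen hq d] with t htB htS
      set r : Fin 3 → ℝ := q + t • d with hr_def
      have hr0 : r 0 = 0 := by simp [hr_def, hd_def, hq0]
      have hr1 : r 1 = q 1 + t := by simp [hr_def, hd_def]
      have hr2 : r 2 = 0 := by simp [hr_def, hd_def, hq2]
      have hP := stage1 r htB hr2
      simp only [hPf_def, hr0] at hP
      have ht1 : q 1 + t ≠ 0 := by
        intro hc
        exact htS (by rw [Set.mem_singleton_iff]; linarith)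
      rw [hr1] at hP
      have : (2 * (q 1 + t)) * ta r = 0 := by linarith
      rcases mul_eq_zero.mp this with hc | hc
      · exact absurd hc (by simp [ht1])
      · exact hc
    have := Zlem hGc (Set.finite_singleton _) hev
    simpa using this
  -- decomposition of ta on B
  have hta_split : ∀ p ∈ B, ta (zc 2 p) = p 0 * A p := by
    intro p hp
    have h1 := hA0 (zc 2 p)
    rw [zc_idem] at h1
    have h2 : zc 2 (zc 0 (zc 2 p)) = zc 2 (zc 0 p) := by
      rw [zc_comm 0 2 p, ← zc_comm, zc_idem]
    rw [h2, hzc20] at h1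
    have h3 : ta (zc 2 (zc 0 p)) = 0 := by
      apply stage2 _ (hBzc 2 _ (hBzc 0 p hp))
      · rw [zc_apply, if_neg (by decide), zc_apply, if_pos rfl]
      · rw [zc_apply, if_pos rfl]
    rw [h3] at h1
    rw [h1, hA_def]
    ring
  have hta_full : ∀ p ∈ B, ta p = p 0 * A p + p 2 * a1 p := by
    intro p hp
    rw [ha1 p, hta_split p hp]
  -- the R identity on the slice
  set Rf : (Fin 3 → ℝ) → ℝ := fun p => 3*tb p + 2*p 1*A p - tl p*p 1 with hRf_def
  have hRfc : Continuous Rf := by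
    apply Continuous.sub
    · exact (continuous_const.mul htb.continuous).add
        ((continuous_const.mul (continuous_apply 1)).mul hAsm.continuous)
    · exact htl.continuous.mul (continuous_apply 1)
  have stage3 : ∀ p ∈ B, p 2 = 0 → Rf p = 0 := by
    intro p hp hp2
    set d : Fin 3 → ℝ := fun j => if j = 0 then 1 else 0 with hd_def
    have hGc : ContinuousAt (fun t : ℝ => Rf (p + t • d)) 0 := by
      apply Continuous.continuousAt
      exact hRfc.comp (continuous_const.add (continuous_id.smul continuous_const))
    have hev : ∀ᶠ t : ℝ in nhds 0, t ∉ ({-p 0} : Set ℝ) → Rf (p + t • d) = 0 := by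
      filter_upwards [shift_mem_eventually hBopen hp d] with t htB htS
      set r : Fin 3 → ℝ := p + t • d with hr_def
      have hr0 : r 0 = p 0 + t := by simp [hr_def, hd_def]
      have hr2 : r 2 = 0 := by simp [hr_def, hd_def, hp2]
      have ht0 : r 0 ≠ 0 := by
        rw [hr0]; intro hc
        exact htS (by rw [Set.mem_singleton_iff]; linarith)
      have hP := stage1 r htB hr2
      have h5 : ta r = r 0 * A r := by
        rw [hta_full r htB, hr2]; ring
      have hfac : r 0 * Rf r = 0 := by
        simp only [hRf_def]
        simp only [hPf_def] at hP
        linear_combination hP - 2*r 1*h5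
      rcases mul_eq_zero.mp hfac with hc | hc
      · exact absurd hc ht0
      · exact hc
    have := Zlem hGc (Set.finite_singleton _) hev
    simpa using this
  -- the T identity
  set Tf : (Fin 3 → ℝ) → ℝ := fun p => 2*tc p - (p 2*tl p - p 0^2*p 1^3*lam1 p
      + 2*p 0*p 1^3*a1 p + 3*p 0^2*p 1^2*b1 p) with hTf_def
  have hTfc : Continuous Tf := by
    have e0 : Continuous fun p : Fin 3 → ℝ => p 0 := continuous_apply 0
    have e1 : Continuous fun p : Fin 3 → ℝ => p 1 := continuous_apply 1
    have e2 : Continuous fun p : Fin 3 → ℝ => p 2 := continuous_apply 2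
    apply (continuous_const.mul htc.continuous).sub
    apply Continuous.add
    apply Continuous.add
    · exact (e2.mul htl.continuous).sub
        (((e0.pow 2).mul (e1.pow 3)).mul hlam1sm.continuous)
    · exact ((continuous_const.mul e0).mul (e1.pow 3)).mul ha1sm.continuous
    · exact ((continuous_const.mul (e0.pow 2)).mul (e1.pow 2)).mul hb1sm.continuous
  have stage4 : ∀ p ∈ B, p 2 * Tf p = 0 := by
    intro p hp
    have E0 := htanB p hp
    have E1 := hta_full p hp
    have E2 := hb1 p
    have E4 := hlam1 p
    have E3 : 3*tb (zc 2 p) + 2*p 1*A p - tl (zc 2 p)*p 1 = 0 := by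
      have h1 := stage3 (zc 2 p) (hBzc 2 p hp) (hzc22 p)
      simp only [hRf_def] at h1
      rw [hzc21, hAz] at h1
      exact h1
    simp only [hTf_def]
    linear_combination E0 + 2*p 0*p 1^3*E1 + 3*p 0^2*p 1^2*E2 + p 0^2*p 1^2*E3
      - p 0^2*p 1^3*E4
  have stage5 : ∀ p ∈ B, Tf p = 0 := by
    intro p hp
    set d : Fin 3 → ℝ := fun j => if j = 2 then 1 else 0 with hd_def
    have hGc : ContinuousAt (fun t : ℝ => Tf (p + t • d)) 0 := by
      apply Continuous.continuousAt
      exact hTfc.comp (continuous_const.add (continuous_id.smul continuous_const))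
    have hev : ∀ᶠ t : ℝ in nhds 0, t ∉ ({-p 2} : Set ℝ) → Tf (p + t • d) = 0 := by
      filter_upwards [shift_mem_eventually hBopen hp d] with t htB htS
      set r : Fin 3 → ℝ := p + t • d with hr_def
      have hr2 : r 2 = p 2 + t := by simp [hr_def, hd_def]
      have ht2 : r 2 ≠ 0 := by
        rw [hr2]; intro hc
        exact htS (by rw [Set.mem_singleton_iff]; linarith)
      rcases mul_eq_zero.mp (stage4 r htB) with hc | hc
      · exact absurd hc ht2
      · exact hc
    have := Zlem hGc (Set.finite_singleton _) hev
    simpa using this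
  -- conclusion
  refine ⟨B, hBopen, hB0, hBU,
    fun p => A p/3 + p 2*lam1 p/6, fun p => tl p/6, fun p => b1 p/2,
    fun p => a1 p - p 0*lam1 p/2, ?_, ?_, ?_, ?_, ?_⟩
  · have e2 : ContDiff ℝ ∞ fun p : Fin 3 → ℝ => p 2 :=
      (ContinuousLinearMap.proj (R := ℝ) (φ := fun _ : Fin 3 => ℝ) 2).contDiff
    exact (((hAsm.div_const 3).add ((e2.mul hlam1sm).div_const 6))).contDiffOn
  · exact (htl.div_const 6).contDiffOn
  · exact (hb1sm.div_const 2).contDiffOn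
  · have e0 : ContDiff ℝ ∞ fun p : Fin 3 → ℝ => p 0 :=
      (ContinuousLinearMap.proj (R := ℝ) (φ := fun _ : Fin 3 => ℝ) 0).contDiff
    exact (ha1sm.sub ((e0.mul hlam1sm).div_const 2)).contDiffOn
  · intro p hp
    have hXa : ξ p 0 = ta p := by simp [hta_def, hbump1 p hp]
    have hXb : ξ p 1 = tb p := by simp [htb_def, hbump1 p hp]
    have hXc : ξ p 2 = tc p := by simp [htc_def, hbump1 p hp]
    have E1 := hta_full p hp
    have E2 := hb1 p
    have E4 := hlam1 p
    have E3 : 3*tb (zc 2 p) + 2*p 1*A p - tl (zc 2 p)*p 1 = 0 := by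
      have h1 := stage3 (zc 2 p) (hBzc 2 p hp) (hzc22 p)
      simp only [hRf_def] at h1
      rw [hzc21, hAz] at h1
      exact h1
    have E5 := stage5 p hp
    simp only [hTf_def] at E5
    funext j
    rw [hξ₁, hξ₂, hξ₃, hξ₄]
    fin_cases j
    · show ξ p 0 = (A p/3 + p 2*lam1 p/6) * (3*p 0) + tl p/6 * 0 + b1 p/2 * 0
        + (a1 p - p 0*lam1 p/2) * (p 2)
      linear_combination hXa + E1
    · show ξ p 1 = (A p/3 + p 2*lam1 p/6) * (-2*p 1) + tl p/6 * (2*p 1)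
        + b1 p/2 * (2*p 2) + (a1 p - p 0*lam1 p/2) * 0
      linear_combination hXb + E2 + (1/3)*E3 - (p 1/3)*E4
    · show ξ p 2 = (A p/3 + p 2*lam1 p/6) * 0 + tl p/6 * (3*p 2)
        + b1 p/2 * (3*p 0^2*p 1^2) + (a1 p - p 0*lam1 p/2) * (p 0*p 1^3)
      linear_combination hXc + (1/2)*E5
end

section
/- Let v₂, v₃ ∈ ℝ and let H(x) = a(x)·v₂ + b₀(x)²·v₃ be the height function of the folded cuspidal edge along its cuspidal edge curve Σ(x) = (x, a(x), b₀(x)²), in the direction (0, v₂, v₃). Then H'(0) = 0 and H''(0) = a''(0)v₂ + 2b₀'(0)²v₃. Moreover, if b₀'(0) ≠ 0, a''(0) ≠ 0, (v₂, v₃) ≠ (0,0) and H''(0) = 0, then H'''(0) ≠ 0 if and only if 3a''(0)b₀''(0) − a'''(0)b₀'(0) ≠ 0 (i.e. if and only if the torsion τ_Σ(0) of Σ is nonzero). In other words, H has an A₁ singularity at 0 exactly when the plane orthogonal to (0,v₂,v₃) is not the osculating plane of Σ, and an A₂ singularity when it is the osculating plane and τ_Σ(0) ≠ 0. -/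
open Real Set

/-- Let `H(x) = a(x)v₂ + b₀(x)²v₃` be the height function of the folded
cuspidal edge along its cuspidal edge curve `Σ(x) = (x, a(x), b₀(x)²)` in the
direction `(0, v₂, v₃)`. Then `H'(0) = 0` and `H''(0) = a''(0)v₂ + 2b₀'(0)²v₃`;
moreover if `b₀'(0) ≠ 0`, `a''(0) ≠ 0`, `(v₂,v₃) ≠ (0,0)` and `H''(0) = 0`, then
`H'''(0) ≠ 0 ↔ 3a''(0)b₀''(0) − a'''(0)b₀'(0) ≠ 0` (i.e. iff `τ_Σ(0) ≠ 0`): `H` has an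
`A₁` singularity exactly when the plane is not the osculating plane of `Σ`, and an
`A₂` singularity when it is the osculating plane and `τ_Σ(0) ≠ 0`. -/
theorem stmt13 (a b₀ : ℝ → ℝ)
    (ha : ContDiff ℝ (⊤ : ℕ∞) a) (hb₀ : ContDiff ℝ (⊤ : ℕ∞) b₀)
    (ha0 : a 0 = 0) (ha0' : deriv a 0 = 0) (hb₀0 : b₀ 0 = 0)
    (v₂ v₃ : ℝ) (H : ℝ → ℝ) (hH : ∀ x, H x = a x * v₂ + b₀ x ^ 2 * v₃) :
    deriv H 0 = 0 ∧
    iteratedDeriv 2 H 0 = iteratedDeriv 2 a 0 * v₂ + 2 * deriv b₀ 0 ^ 2 * v₃ ∧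
    (deriv b₀ 0 ≠ 0 → iteratedDeriv 2 a 0 ≠ 0 → (v₂, v₃) ≠ (0, 0) →
      iteratedDeriv 2 H 0 = 0 →
      (iteratedDeriv 3 H 0 ≠ 0 ↔
        3 * iteratedDeriv 2 a 0 * iteratedDeriv 2 b₀ 0 -
          iteratedDeriv 3 a 0 * deriv b₀ 0 ≠ 0)) := by

  have hHe : H = fun x => a x * v₂ + b₀ x ^ 2 * v₃ := funext hH
  subst hHe
  have dA : Differentiable ℝ a := ha.differentiable (by simp)
  have hA1 : ContDiff ℝ (⊤ : ℕ∞) (deriv a) := (contDiff_infty_iff_deriv.mp ha).2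
  have dA1 : Differentiable ℝ (deriv a) := hA1.differentiable (by simp)
  have hA2 : ContDiff ℝ (⊤ : ℕ∞) (deriv (deriv a)) := (contDiff_infty_iff_deriv.mp hA1).2
  have dA2 : Differentiable ℝ (deriv (deriv a)) := hA2.differentiable (by simp)
  have dB : Differentiable ℝ b₀ := hb₀.differentiable (by simp)
  have hB1 : ContDiff ℝ (⊤ : ℕ∞) (deriv b₀) := (contDiff_infty_iff_deriv.mp hb₀).2
  have dB1 : Differentiable ℝ (deriv b₀) := hB1.differentiable (by simp)
  have hB2 : ContDiff ℝ (⊤ : ℕ∞) (deriv (deriv b₀)) := (contDiff_infty_iff_deriv.mp hB1).2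
  have dB2 : Differentiable ℝ (deriv (deriv b₀)) := hB2.differentiable (by simp)
  have hD1 : deriv (fun x => a x * v₂ + b₀ x ^ 2 * v₃)
      = fun x => deriv a x * v₂ + 2 * b₀ x * deriv b₀ x * v₃ := by
    funext x
    have h : HasDerivAt (fun x => a x * v₂ + b₀ x ^ 2 * v₃)
        (deriv a x * v₂ + 2 * b₀ x * deriv b₀ x * v₃) x := by
      have h1 := ((dA x).hasDerivAt).mul_const v₂
      have h2 := (((dB x).hasDerivAt).pow 2).mul_const v₃
      exact (h1.add h2).congr_deriv (by ring)
    exact h.deriv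
  have hD2 : deriv (fun x => deriv a x * v₂ + 2 * b₀ x * deriv b₀ x * v₃)
      = fun x => deriv (deriv a) x * v₂
          + (2 * (deriv b₀ x * deriv b₀ x) + 2 * b₀ x * deriv (deriv b₀) x) * v₃ := by
    funext x
    have h : HasDerivAt (fun x => deriv a x * v₂ + 2 * b₀ x * deriv b₀ x * v₃)
        (deriv (deriv a) x * v₂
          + (2 * (deriv b₀ x * deriv b₀ x) + 2 * b₀ x * deriv (deriv b₀) x) * v₃) x := by
      have h1 := ((dA1 x).hasDerivAt).mul_const v₂
      have h2 := ((((dB x).hasDerivAt.const_mul (2 : ℝ)).mul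
        ((dB1 x).hasDerivAt)).mul_const v₃)
      exact (h1.add h2).congr_deriv (by ring)
    exact h.deriv
  have hD3 : deriv (fun x => deriv (deriv a) x * v₂
          + (2 * (deriv b₀ x * deriv b₀ x) + 2 * b₀ x * deriv (deriv b₀) x) * v₃) 0
      = deriv (deriv (deriv a)) 0 * v₂
          + (6 * (deriv b₀ 0 * deriv (deriv b₀) 0)) * v₃ := by
    have h : HasDerivAt (fun x => deriv (deriv a) x * v₂
          + (2 * (deriv b₀ x * deriv b₀ x) + 2 * b₀ x * deriv (deriv b₀) x) * v₃)
        (deriv (deriv (deriv a)) 0 * v₂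
          + (6 * (deriv b₀ 0 * deriv (deriv b₀) 0)) * v₃) 0 := by
      have h1 := ((dA2 0).hasDerivAt).mul_const v₂
      have h2a := ((dB1 0).hasDerivAt.mul ((dB1 0).hasDerivAt)).const_mul (2 : ℝ)
      have h2b := ((dB 0).hasDerivAt.const_mul (2 : ℝ)).mul ((dB2 0).hasDerivAt)
      have h2 := (h2a.add h2b).mul_const v₃
      exact (h1.add h2).congr_deriv (by rw [hb₀0]; ring)
    exact h.deriv
  have i2 : ∀ f : ℝ → ℝ, iteratedDeriv 2 f = deriv (deriv f) := by
    intro f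
    rw [iteratedDeriv_succ, iteratedDeriv_one]
  have i3 : ∀ f : ℝ → ℝ, iteratedDeriv 3 f = deriv (deriv (deriv f)) := by
    intro f
    rw [iteratedDeriv_succ, iteratedDeriv_succ, iteratedDeriv_one]
  have e1 : deriv (fun x => a x * v₂ + b₀ x ^ 2 * v₃) 0 = 0 := by
    rw [hD1]; simp [ha0', hb₀0]
  have e2 : iteratedDeriv 2 (fun x => a x * v₂ + b₀ x ^ 2 * v₃) 0
      = iteratedDeriv 2 a 0 * v₂ + 2 * deriv b₀ 0 ^ 2 * v₃ := by
    rw [i2, i2, hD1, hD2]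
    simp only [hb₀0]
    ring
  refine ⟨e1, e2, ?_⟩
  intro hb1 hA2ne hv h2z
  have e3 : iteratedDeriv 3 (fun x => a x * v₂ + b₀ x ^ 2 * v₃) 0
      = iteratedDeriv 3 a 0 * v₂ + 6 * deriv b₀ 0 * iteratedDeriv 2 b₀ 0 * v₃ := by
    rw [i3, i3, i2, hD1, hD2, hD3]
    ring
  rw [e2] at h2z
  have hv3 : v₃ ≠ 0 := by
    intro h3
    apply hv
    have : iteratedDeriv 2 a 0 * v₂ = 0 := by rw [h3] at h2z; linarith
    have hv2 : v₂ = 0 := by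
      rcases mul_eq_zero.mp this with h | h
      · exact absurd h hA2ne
      · exact h
    simp [hv2, h3]
  have hv2 : v₂ = -(2 * deriv b₀ 0 ^ 2 * v₃) / iteratedDeriv 2 a 0 := by
    field_simp
    linarith
  rw [e3, hv2]
  have key : iteratedDeriv 3 a 0 * (-(2 * deriv b₀ 0 ^ 2 * v₃) / iteratedDeriv 2 a 0)
      + 6 * deriv b₀ 0 * iteratedDeriv 2 b₀ 0 * v₃
      = (2 * deriv b₀ 0 * v₃ / iteratedDeriv 2 a 0)
        * (3 * iteratedDeriv 2 a 0 * iteratedDeriv 2 b₀ 0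
            - iteratedDeriv 3 a 0 * deriv b₀ 0) := by
    field_simp
    ring
  rw [key]
  constructor
  · intro h hc
    exact h (by rw [hc, mul_zero])
  · intro h hc
    have hfac : (2 * deriv b₀ 0 * v₃ / iteratedDeriv 2 a 0) ≠ 0 := by
      apply div_ne_zero _ hA2ne
      exact mul_ne_zero (mul_ne_zero two_ne_zero hb1) hv3
    exact h (by
      rcases mul_eq_zero.mp hc with h' | h'
      · exact absurd h' hfac
      · exact h')
end

section
/- Assume b₀'(0) ≠ 0, let d : (−ε, ε) → ℝ be a smooth function with d(0) = 0 satisfying b₀(d(y)) + b₁(d(y))·y² + ½(b₃(d(y), y) + b₃(d(y), −y))·y⁴ = 0 for all |y| < ε, and let v = (v₁, v₂, v₃) ∈ ℝ³. Define the height function along the double point curve h(y) = ⟨φ(d(y), y), v⟩. Then h'(0) = h'''(0) = 0 and h''(0) = v₂ − 2b₁(0)v₁/b₀'(0). Moreover, if h''(0) = 0 and v₁ ≠ 0, then h⁽⁴⁾(0) ≠ 0 if and only if 2b₃(0,0)b₀'(0)² − 2b₀'(0)b₁'(0)b₁(0) − 2b₁(0)³a''(0) + b₁(0)²b₀''(0)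 ≠ 0; i.e. h has an A₃ singularity at 0 exactly when the plane orthogonal to v contains the limiting tangent vector of the double point curve, v₁ ≠ 0, and the singular torsion τ_sing of the double point curve is nonzero. -/
open Real Set

private lemma hdAt {s : Set ℝ} (hs : IsOpen s) {f : ℝ → ℝ}
    (hf : ContDiffOn ℝ (⊤:ℕ∞) f s) {y : ℝ} (hy : y ∈ s) :
    HasDerivAt f (deriv f y) y :=
  ((hf.differentiableOn (by simp)).differentiableAt
    (hs.mem_nhds hy)).hasDerivAt

private lemma derivRst {s : Set ℝ} (hs : IsOpen s) {f : ℝ → ℝ}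
    (hf : ContDiffOn ℝ (⊤:ℕ∞) f s) : ContDiffOn ℝ (⊤:ℕ∞) (deriv f) s :=
  hf.deriv_of_isOpen hs (by exact_mod_cast le_top)

private lemma derivCongrOn {s : Set ℝ} (hs : IsOpen s) {f g : ℝ → ℝ}
    (h : ∀ y ∈ s, f y = g y) {y : ℝ} (hy : y ∈ s) : deriv f y = deriv g y :=
  (Filter.eventuallyEq_of_mem (hs.mem_nhds hy) h).deriv_eq

private lemma derivZeroOn {s : Set ℝ} (hs : IsOpen s) {f : ℝ → ℝ}
    (h : ∀ y ∈ s, f y = 0) {y : ℝ} (hy : y ∈ s) : deriv f y = 0 := by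
  rw [derivCongrOn hs (g := fun _ => (0:ℝ)) h hy]
  simp

private lemma compAt {s : Set ℝ} (hs : IsOpen s) {d : ℝ → ℝ}
    (hd : ContDiffOn ℝ (⊤:ℕ∞) d s) {g : ℝ → ℝ} (hg : ContDiff ℝ (⊤:ℕ∞) g)
    {y : ℝ} (hy : y ∈ s) :
    HasDerivAt (fun t => g (d t)) (deriv g (d y) * deriv d y) y := by
  have h1 : HasDerivAt g (deriv g (d y)) (d y) :=
    ((hg.differentiable (by simp)) (d y)).hasDerivAt
  simpa [Function.comp_def] using h1.comp y (hdAt hs hd hy)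

/-- Chain rule formulas for `g ∘ d` up to fourth order, on an open set. -/
private lemma chain4 {s : Set ℝ} (hs : IsOpen s) {d : ℝ → ℝ}
    (hd : ContDiffOn ℝ (⊤:ℕ∞) d s) {g : ℝ → ℝ} (hg : ContDiff ℝ (⊤:ℕ∞) g) :
    (∀ y ∈ s, deriv (fun t => g (d t)) y = deriv g (d y) * deriv d y) ∧
    (∀ y ∈ s, deriv (deriv (fun t => g (d t))) y =
      deriv (deriv g) (d y) * deriv d y * deriv d y
      + deriv g (d y) * deriv (deriv d) y) ∧
    (∀ y ∈ s, deriv (deriv (deriv (fun t => g (d t)))) y =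
      deriv (deriv (deriv g)) (d y) * deriv d y * deriv d y * deriv d y
      + 3 * (deriv (deriv g) (d y) * deriv d y * deriv (deriv d) y)
      + deriv g (d y) * deriv (deriv (deriv d)) y) ∧
    (∀ y ∈ s, deriv (deriv (deriv (deriv (fun t => g (d t))))) y =
      deriv (deriv (deriv (deriv g))) (d y)
        * deriv d y * deriv d y * deriv d y * deriv d y
      + 6 * (deriv (deriv (deriv g)) (d y) * deriv d y * deriv d y
          * deriv (deriv d) y)
      + 3 * (deriv (deriv g) (d y) * deriv (deriv d) y * deriv (deriv d) y)
      + 4 * (deriv (deriv g) (d y) * deriv d y * deriv (deriv (deriv d)) y)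
      + deriv g (d y) * deriv (deriv (deriv (deriv d))) y) := by
  have hg1 : ContDiff ℝ (⊤:ℕ∞) (deriv g) := (contDiff_infty_iff_deriv.mp hg).2
  have hg2 : ContDiff ℝ (⊤:ℕ∞) (deriv (deriv g)) := (contDiff_infty_iff_deriv.mp hg1).2
  have hg3 : ContDiff ℝ (⊤:ℕ∞) (deriv (deriv (deriv g))) :=
    (contDiff_infty_iff_deriv.mp hg2).2
  have hd1 : ContDiffOn ℝ (⊤:ℕ∞) (deriv d) s := derivRst hs hd
  have hd2 : ContDiffOn ℝ (⊤:ℕ∞) (deriv (deriv d)) s := derivRst hs hd1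
  have hd3 : ContDiffOn ℝ (⊤:ℕ∞) (deriv (deriv (deriv d))) s := derivRst hs hd2
  have L1 : ∀ y ∈ s, deriv (fun t => g (d t)) y = deriv g (d y) * deriv d y :=
    fun y hy => (compAt hs hd hg hy).deriv
  have H2 : ∀ y ∈ s, HasDerivAt (fun t => deriv g (d t) * deriv d t)
      (deriv (deriv g) (d y) * deriv d y * deriv d y
        + deriv g (d y) * deriv (deriv d) y) y := by
    intro y hy
    exact (compAt hs hd hg1 hy).mul (hdAt hs hd1 hy)
  have L2 : ∀ y ∈ s, deriv (deriv (fun t => g (d t))) y =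
      deriv (deriv g) (d y) * deriv d y * deriv d y
      + deriv g (d y) * deriv (deriv d) y := by
    intro y hy
    rw [derivCongrOn hs L1 hy]
    exact (H2 y hy).deriv
  have H3 : ∀ y ∈ s, HasDerivAt
      (fun t => deriv (deriv g) (d t) * deriv d t * deriv d t
        + deriv g (d t) * deriv (deriv d) t)
      (deriv (deriv (deriv g)) (d y) * deriv d y * deriv d y * deriv d y
        + 3 * (deriv (deriv g) (d y) * deriv d y * deriv (deriv d) y)
        + deriv g (d y) * deriv (deriv (deriv d)) y) y := by
    intro y hy
    have h := (((compAt hs hd hg2 hy).mul (hdAt hs hd1 hy)).mul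
        (hdAt hs hd1 hy)).add ((compAt hs hd hg1 hy).mul (hdAt hs hd2 hy))
    refine h.congr_deriv ?_
    simp only [Pi.mul_apply]
    ring
  have L3 : ∀ y ∈ s, deriv (deriv (deriv (fun t => g (d t)))) y =
      deriv (deriv (deriv g)) (d y) * deriv d y * deriv d y * deriv d y
      + 3 * (deriv (deriv g) (d y) * deriv d y * deriv (deriv d) y)
      + deriv g (d y) * deriv (deriv (deriv d)) y := by
    intro y hy
    rw [derivCongrOn hs (fun z hz => derivCongrOn hs L1 hz) hy,
        derivCongrOn hs (fun z hz => (H2 z hz).deriv) hy]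
    exact (H3 y hy).deriv
  have H4 : ∀ y ∈ s, HasDerivAt
      (fun t => deriv (deriv (deriv g)) (d t) * deriv d t * deriv d t * deriv d t
        + 3 * (deriv (deriv g) (d t) * deriv d t * deriv (deriv d) t)
        + deriv g (d t) * deriv (deriv (deriv d)) t)
      (deriv (deriv (deriv (deriv g))) (d y)
          * deriv d y * deriv d y * deriv d y * deriv d y
        + 6 * (deriv (deriv (deriv g)) (d y) * deriv d y * deriv d y
            * deriv (deriv d) y)
        + 3 * (deriv (deriv g) (d y) * deriv (deriv d) y * deriv (deriv d) y)
        + 4 * (deriv (deriv g) (d y) * deriv d y * deriv (deriv (deriv d)) y)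
        + deriv g (d y) * deriv (deriv (deriv (deriv d))) y) y := by
    intro y hy
    have h := (((((compAt hs hd hg3 hy).mul (hdAt hs hd1 hy)).mul
        (hdAt hs hd1 hy)).mul (hdAt hs hd1 hy)).add
        ((((compAt hs hd hg2 hy).mul (hdAt hs hd1 hy)).mul
          (hdAt hs hd2 hy)).const_mul 3)).add
        ((compAt hs hd hg1 hy).mul (hdAt hs hd3 hy))
    refine h.congr_deriv ?_
    simp only [Pi.mul_apply]
    ring
  have L4 : ∀ y ∈ s, deriv (deriv (deriv (deriv (fun t => g (d t))))) y =
      deriv (deriv (deriv (deriv g))) (d y)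
        * deriv d y * deriv d y * deriv d y * deriv d y
      + 6 * (deriv (deriv (deriv g)) (d y) * deriv d y * deriv d y
          * deriv (deriv d) y)
      + 3 * (deriv (deriv g) (d y) * deriv (deriv d) y * deriv (deriv d) y)
      + 4 * (deriv (deriv g) (d y) * deriv d y * deriv (deriv (deriv d)) y)
      + deriv g (d y) * deriv (deriv (deriv (deriv d))) y := by
    intro y hy
    rw [derivCongrOn hs
        (fun z hz => derivCongrOn hs (fun w hw => derivCongrOn hs L1 hw) hz) hy,
        derivCongrOn hs (fun z hz => derivCongrOn hs (fun w hw => (H2 w hw).deriv) hz) hy,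
        derivCongrOn hs (fun z hz => (H3 z hz).deriv) hy]
    exact (H4 y hy).deriv
  exact ⟨L1, L2, L3, L4⟩
/-- Let `h(y) = ⟨φ(d(y), y), v⟩` be the height function along the double
point curve of the folded cuspidal edge, in the direction `v = (v₁, v₂, v₃)`. Then
`h'(0) = h'''(0) = 0`, `h''(0) = v₂ − 2b₁(0)v₁/b₀'(0)`, and if `h''(0) = 0` and
`v₁ ≠ 0` then `h⁗(0) ≠ 0 ↔ 2b₃(0,0)b₀'(0)² − 2b₀'(0)b₁'(0)b₁(0) − 2b₁(0)³a''(0) +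
b₁(0)²b₀''(0) ≠ 0`; i.e. `h` has an `A₃` singularity exactly when the plane contains
the limiting tangent vector of the double point curve, `v₁ ≠ 0`, and the singular
torsion of the double point curve is nonzero. -/
theorem stmt14 (a b₀ b₁ b₂ : ℝ → ℝ) (b₃ : ℝ → ℝ → ℝ)
    (ha : ContDiff ℝ (⊤ : ℕ∞) a) (hb₀ : ContDiff ℝ (⊤ : ℕ∞) b₀)
    (hb₁ : ContDiff ℝ (⊤ : ℕ∞) b₁) (hb₂ : ContDiff ℝ (⊤ : ℕ∞) b₂)
    (hb₃ : ContDiff ℝ (⊤ : ℕ∞) (Function.uncurry b₃))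
    (ha0 : a 0 = 0) (ha0' : deriv a 0 = 0) (hb₀0 : b₀ 0 = 0)
    (hb₀0' : deriv b₀ 0 ≠ 0)
    (ε : ℝ) (hε : 0 < ε) (d : ℝ → ℝ)
    (hd : ContDiffOn ℝ (⊤ : ℕ∞) d (Set.Ioo (-ε) ε)) (hd0 : d 0 = 0)
    (hdeq : ∀ y ∈ Set.Ioo (-ε) ε,
      b₀ (d y) + b₁ (d y) * y ^ 2 +
        (1 / 2) * (b₃ (d y) y + b₃ (d y) (-y)) * y ^ 4 = 0)
    (φ : ℝ → ℝ → Fin 3 → ℝ)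
    (hφ : ∀ x y, φ x y =
      ![x, a x + y ^ 2 / 2,
        (b₀ x + b₁ x * y ^ 2 + b₂ x * y ^ 3 + b₃ x y * y ^ 4) ^ 2])
    (v₁ v₂ v₃ : ℝ) (hgt : ℝ → ℝ)
    (hhgt : ∀ y, hgt y = dot3 (φ (d y) y) ![v₁, v₂, v₃]) :
    deriv hgt 0 = 0 ∧
    iteratedDeriv 3 hgt 0 = 0 ∧
    iteratedDeriv 2 hgt 0 = v₂ - 2 * b₁ 0 * v₁ / deriv b₀ 0 ∧
    (iteratedDeriv 2 hgt 0 = 0 → v₁ ≠ 0 →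
      (iteratedDeriv 4 hgt 0 ≠ 0 ↔
        2 * b₃ 0 0 * deriv b₀ 0 ^ 2 - 2 * deriv b₀ 0 * deriv b₁ 0 * b₁ 0 -
          2 * b₁ 0 ^ 3 * iteratedDeriv 2 a 0 + b₁ 0 ^ 2 * iteratedDeriv 2 b₀ 0 ≠ 0)) := by
  have hIo : IsOpen (Set.Ioo (-ε) ε) := isOpen_Ioo
  have h0I : (0:ℝ) ∈ Set.Ioo (-ε) ε := by constructor <;> linarith
  set I : Set ℝ := Set.Ioo (-ε) ε with hIdef
  set A : ℝ → ℝ := fun y => b₀ (d y) with hA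
  set B : ℝ → ℝ := fun y => b₁ (d y) with hB
  set C : ℝ → ℝ := fun y => 1 / 2 * (b₃ (d y) y + b₃ (d y) (-y)) with hC
  set Aa : ℝ → ℝ := fun y => a (d y) with hAadef
  set E : ℝ → ℝ := fun y => 1 / 2 * (b₃ (d y) y - b₃ (d y) (-y)) with hE
  set W : ℝ → ℝ := fun y => (b₂ (d y) + E y * y) ^ 2 with hWdef
  -- smoothness of the building blocks
  have hAs : ContDiffOn ℝ (⊤:ℕ∞) A I := hb₀.comp_contDiffOn hd
  have hBs : ContDiffOn ℝ (⊤:ℕ∞) B I := hb₁.comp_contDiffOn hd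
  have hAas : ContDiffOn ℝ (⊤:ℕ∞) Aa I := ha.comp_contDiffOn hd
  have h3p : ContDiffOn ℝ (⊤:ℕ∞) (fun y => b₃ (d y) y) I :=
    (hb₃.comp_contDiffOn (hd.prodMk contDiffOn_id) :)
  have h3m : ContDiffOn ℝ (⊤:ℕ∞) (fun y => b₃ (d y) (-y)) I :=
    (hb₃.comp_contDiffOn (hd.prodMk contDiffOn_id.neg) :)
  have hCs : ContDiffOn ℝ (⊤:ℕ∞) C I := by
    rw [hC]; exact contDiffOn_const.mul (h3p.add h3m)
  have hEs : ContDiffOn ℝ (⊤:ℕ∞) E I := by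
    rw [hE]; exact contDiffOn_const.mul (h3p.sub h3m)
  have hWs : ContDiffOn ℝ (⊤:ℕ∞) W I := by
    rw [hWdef]; exact ((hb₂.comp_contDiffOn hd).add (hEs.mul contDiffOn_id)).pow 2
  have hds1 : ContDiffOn ℝ (⊤:ℕ∞) (deriv d) I := derivRst hIo hd
  have hds2 : ContDiffOn ℝ (⊤:ℕ∞) (deriv (deriv d)) I := derivRst hIo hds1
  have hds3 : ContDiffOn ℝ (⊤:ℕ∞) (deriv (deriv (deriv d))) I := derivRst hIo hds2
  have hAs1 : ContDiffOn ℝ (⊤:ℕ∞) (deriv A) I := derivRst hIo hAs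
  have hAs2 : ContDiffOn ℝ (⊤:ℕ∞) (deriv (deriv A)) I := derivRst hIo hAs1
  have hAs3 : ContDiffOn ℝ (⊤:ℕ∞) (deriv (deriv (deriv A))) I := derivRst hIo hAs2
  have hBs1 : ContDiffOn ℝ (⊤:ℕ∞) (deriv B) I := derivRst hIo hBs
  have hBs2 : ContDiffOn ℝ (⊤:ℕ∞) (deriv (deriv B)) I := derivRst hIo hBs1
  have hBs3 : ContDiffOn ℝ (⊤:ℕ∞) (deriv (deriv (deriv B))) I := derivRst hIo hBs2
  have hCs1 : ContDiffOn ℝ (⊤:ℕ∞) (deriv C) I := derivRst hIo hCs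
  have hCs2 : ContDiffOn ℝ (⊤:ℕ∞) (deriv (deriv C)) I := derivRst hIo hCs1
  have hCs3 : ContDiffOn ℝ (⊤:ℕ∞) (deriv (deriv (deriv C))) I := derivRst hIo hCs2
  have hAas1 : ContDiffOn ℝ (⊤:ℕ∞) (deriv Aa) I := derivRst hIo hAas
  have hAas2 : ContDiffOn ℝ (⊤:ℕ∞) (deriv (deriv Aa)) I := derivRst hIo hAas1
  have hAas3 : ContDiffOn ℝ (⊤:ℕ∞) (deriv (deriv (deriv Aa))) I := derivRst hIo hAas2
  have hWs1 : ContDiffOn ℝ (⊤:ℕ∞) (deriv W) I := derivRst hIo hWs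
  have hWs2 : ContDiffOn ℝ (⊤:ℕ∞) (deriv (deriv W)) I := derivRst hIo hWs1
  have hWs3 : ContDiffOn ℝ (⊤:ℕ∞) (deriv (deriv (deriv W))) I := derivRst hIo hWs2
  -- the double point equation: F = 0 on I
  have hFzero : ∀ y ∈ I, A y + B y * y ^ 2 + C y * y ^ 4 = 0 := by
    intro y hy
    have h := hdeq y hy
    rw [hA, hB, hC]
    linear_combination h
  -- first derivative of F
  have HF1 : ∀ y ∈ I, HasDerivAt (fun y => A y + B y * y ^ 2 + C y * y ^ 4)
      (deriv A y + (deriv B y * y ^ 2 + 2 * (B y * y))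
        + (deriv C y * y ^ 4 + 4 * (C y * y ^ 3))) y := by
    intro y hy
    have h := ((hdAt hIo hAs hy).add
      ((hdAt hIo hBs hy).mul (hasDerivAt_pow 2 y))).add
      ((hdAt hIo hCs hy).mul (hasDerivAt_pow 4 y))
    refine h.congr_deriv ?_
    ring
  have hF1zero : ∀ y ∈ I, deriv A y + (deriv B y * y ^ 2 + 2 * (B y * y))
      + (deriv C y * y ^ 4 + 4 * (C y * y ^ 3)) = 0 := by
    intro y hy
    rw [← (HF1 y hy).deriv]
    exact derivZeroOn hIo hFzero hy
  -- second derivative of F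
  have HF2 : ∀ y ∈ I, HasDerivAt (fun y => deriv A y + (deriv B y * y ^ 2 + 2 * (B y * y))
      + (deriv C y * y ^ 4 + 4 * (C y * y ^ 3)))
      (deriv (deriv A) y
        + (deriv (deriv B) y * y ^ 2 + 4 * (deriv B y * y) + 2 * B y)
        + (deriv (deriv C) y * y ^ 4 + 8 * (deriv C y * y ^ 3)
          + 12 * (C y * y ^ 2))) y := by
    intro y hy
    have h := ((hdAt hIo hAs1 hy).add
      (((hdAt hIo hBs1 hy).mul (hasDerivAt_pow 2 y)).add
        (((hdAt hIo hBs hy).mul (hasDerivAt_id' y)).const_mul 2))).add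
      (((hdAt hIo hCs1 hy).mul (hasDerivAt_pow 4 y)).add
        (((hdAt hIo hCs hy).mul (hasDerivAt_pow 3 y)).const_mul 4))
    refine h.congr_deriv ?_
    ring
  have hF2zero : ∀ y ∈ I, deriv (deriv A) y
      + (deriv (deriv B) y * y ^ 2 + 4 * (deriv B y * y) + 2 * B y)
      + (deriv (deriv C) y * y ^ 4 + 8 * (deriv C y * y ^ 3)
        + 12 * (C y * y ^ 2)) = 0 := by
    intro y hy
    rw [← (HF2 y hy).deriv]
    exact derivZeroOn hIo hF1zero hy
  -- third derivative of F
  have HF3 : ∀ y ∈ I, HasDerivAt (fun y => deriv (deriv A) y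
      + (deriv (deriv B) y * y ^ 2 + 4 * (deriv B y * y) + 2 * B y)
      + (deriv (deriv C) y * y ^ 4 + 8 * (deriv C y * y ^ 3)
        + 12 * (C y * y ^ 2)))
      (deriv (deriv (deriv A)) y
        + (deriv (deriv (deriv B)) y * y ^ 2 + 6 * (deriv (deriv B) y * y)
          + 6 * deriv B y)
        + (deriv (deriv (deriv C)) y * y ^ 4 + 12 * (deriv (deriv C) y * y ^ 3)
          + 36 * (deriv C y * y ^ 2) + 24 * (C y * y))) y := by
    intro y hy
    have h := ((hdAt hIo hAs2 hy).add
      ((((hdAt hIo hBs2 hy).mul (hasDerivAt_pow 2 y)).add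
        ((((hdAt hIo hBs1 hy).mul (hasDerivAt_id' y)).const_mul 4))).add
        ((hdAt hIo hBs hy).const_mul 2))).add
      ((((hdAt hIo hCs2 hy).mul (hasDerivAt_pow 4 y)).add
        (((hdAt hIo hCs1 hy).mul (hasDerivAt_pow 3 y)).const_mul 8)).add
        (((hdAt hIo hCs hy).mul (hasDerivAt_pow 2 y)).const_mul 12))
    refine h.congr_deriv ?_
    ring
  have hF3zero : ∀ y ∈ I, deriv (deriv (deriv A)) y
      + (deriv (deriv (deriv B)) y * y ^ 2 + 6 * (deriv (deriv B) y * y)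
        + 6 * deriv B y)
      + (deriv (deriv (deriv C)) y * y ^ 4 + 12 * (deriv (deriv C) y * y ^ 3)
        + 36 * (deriv C y * y ^ 2) + 24 * (C y * y)) = 0 := by
    intro y hy
    rw [← (HF3 y hy).deriv]
    exact derivZeroOn hIo hF2zero hy
  -- fourth derivative of F at 0
  have HF4 : HasDerivAt (fun y => deriv (deriv (deriv A)) y
      + (deriv (deriv (deriv B)) y * y ^ 2 + 6 * (deriv (deriv B) y * y)
        + 6 * deriv B y)
      + (deriv (deriv (deriv C)) y * y ^ 4 + 12 * (deriv (deriv C) y * y ^ 3)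
        + 36 * (deriv C y * y ^ 2) + 24 * (C y * y)))
      (deriv (deriv (deriv (deriv A))) 0 + 12 * deriv (deriv B) 0
        + 24 * C 0) 0 := by
    have h := ((hdAt hIo hAs3 h0I).add
      ((((hdAt hIo hBs3 h0I).mul (hasDerivAt_pow 2 0)).add
        ((((hdAt hIo hBs2 h0I).mul (hasDerivAt_id' 0)).const_mul 6))).add
        ((hdAt hIo hBs1 h0I).const_mul 6))).add
      (((((hdAt hIo hCs3 h0I).mul (hasDerivAt_pow 4 0)).add
        (((hdAt hIo hCs2 h0I).mul (hasDerivAt_pow 3 0)).const_mul 12)).add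
        (((hdAt hIo hCs1 h0I).mul (hasDerivAt_pow 2 0)).const_mul 36)).add
        (((hdAt hIo hCs h0I).mul (hasDerivAt_id' 0)).const_mul 24))
    refine h.congr_deriv ?_
    push_cast
    ring
  have hF4zero : deriv (deriv (deriv (deriv A))) 0 + 12 * deriv (deriv B) 0
      + 24 * C 0 = 0 := by
    rw [← HF4.deriv]
    exact derivZeroOn hIo hF3zero h0I
  -- chain rule values for A = b₀∘d, B = b₁∘d, Aa = a∘d
  obtain ⟨cA1, cA2, cA3, cA4⟩ := chain4 hIo hd hb₀
  rw [← hA] at cA1 cA2 cA3 cA4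
  obtain ⟨cB1, cB2, -, -⟩ := chain4 hIo hd hb₁
  rw [← hB] at cB1 cB2
  obtain ⟨cAa1, cAa2, cAa3, cAa4⟩ := chain4 hIo hd ha
  rw [← hAadef] at cAa1 cAa2 cAa3 cAa4
  have hB0 : B 0 = b₁ 0 := by rw [hB]; show b₁ (d 0) = b₁ 0; rw [hd0]
  have hC0 : C 0 = b₃ 0 0 := by
    rw [hC]; show 1 / 2 * (b₃ (d 0) 0 + b₃ (d 0) (-0)) = b₃ 0 0
    rw [hd0, neg_zero]; ring
  -- values of the derivatives of d at 0
  have hdA0 : deriv A 0 = 0 := by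
    have hz := hF1zero 0 h0I
    linear_combination hz
  have hd10 : deriv d 0 = 0 := by
    have h₁ := cA1 0 h0I
    rw [hd0, hdA0] at h₁
    exact ((mul_eq_zero.mp h₁.symm).resolve_left hb₀0')
  have e2 : deriv b₀ 0 * deriv (deriv d) 0 + 2 * b₁ 0 = 0 := by
    have hz := hF2zero 0 h0I
    have h₂ := cA2 0 h0I
    rw [hd0, hd10] at h₂
    linear_combination hz - h₂ - 2 * hB0
  have hd30 : deriv (deriv (deriv d)) 0 = 0 := by
    have hz := hF3zero 0 h0I
    have h₃ := cA3 0 h0I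
    rw [hd0, hd10] at h₃
    have hb1 := cB1 0 h0I
    rw [hd0, hd10] at hb1
    have hkey : deriv b₀ 0 * deriv (deriv (deriv d)) 0 = 0 := by
      linear_combination hz - h₃ - 6 * hb1
    exact (mul_eq_zero.mp hkey).resolve_left hb₀0'
  have e4 : 3 * (deriv (deriv b₀) 0 * deriv (deriv d) 0 * deriv (deriv d) 0)
      + deriv b₀ 0 * deriv (deriv (deriv (deriv d))) 0
      + 12 * (deriv b₁ 0 * deriv (deriv d) 0) + 24 * b₃ 0 0 = 0 := by
    have h₄ := cA4 0 h0I
    rw [hd0, hd10, hd30] at h₄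
    have hb2 := cB2 0 h0I
    rw [hd0, hd10] at hb2
    linear_combination hF4zero - h₄ - 12 * hb2 - 24 * hC0
  -- values of the derivatives of Aa = a ∘ d at 0
  have hAa10 : deriv Aa 0 = 0 := by
    have h := cAa1 0 h0I
    rw [hd0, hd10] at h
    linear_combination h
  have hAa20 : deriv (deriv Aa) 0 = 0 := by
    have h := cAa2 0 h0I
    rw [hd0, hd10, ha0'] at h
    linear_combination h
  have hAa30 : deriv (deriv (deriv Aa)) 0 = 0 := by
    have h := cAa3 0 h0I
    rw [hd0, hd10, ha0'] at h
    linear_combination h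
  have hAa40 : deriv (deriv (deriv (deriv Aa))) 0 =
      3 * (deriv (deriv a) 0 * deriv (deriv d) 0 * deriv (deriv d) 0) := by
    have h := cAa4 0 h0I
    rw [hd0, hd10, ha0', hd30] at h
    linear_combination h
  -- the height function on I
  have hHeq : ∀ y ∈ I, hgt y =
      v₁ * d y + v₂ * (Aa y + y ^ 2 / 2) + v₃ * (y ^ 6 * W y) := by
    intro y hy
    have hk := hdeq y hy
    rw [hhgt y, hφ]
    simp only [hAadef, hWdef, hE, dot3, Matrix.cons_val_zero, Matrix.cons_val_one,
      Matrix.head_cons, Matrix.cons_val_two, Matrix.tail_cons]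
    linear_combination (v₃ * (b₀ (d y) + b₁ (d y) * y ^ 2 + b₂ (d y) * y ^ 3
      + b₃ (d y) y * y ^ 4
      + y ^ 3 * (b₂ (d y) + 1 / 2 * (b₃ (d y) y - b₃ (d y) (-y)) * y))) * hk
  -- first derivative of hgt
  have HH1 : ∀ y ∈ I, HasDerivAt
      (fun y => v₁ * d y + v₂ * (Aa y + y ^ 2 / 2) + v₃ * (y ^ 6 * W y))
      (v₁ * deriv d y + v₂ * (deriv Aa y + y)
        + v₃ * (6 * (y ^ 5 * W y) + y ^ 6 * deriv W y)) y := by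
    intro y hy
    have h := (((hdAt hIo hd hy).const_mul v₁).add
      (((hdAt hIo hAas hy).add ((hasDerivAt_pow 2 y).div_const 2)).const_mul v₂)).add
      (((hasDerivAt_pow 6 y).mul (hdAt hIo hWs hy)).const_mul v₃)
    refine h.congr_deriv ?_
    push_cast
    ring
  have hgt1 : ∀ y ∈ I, deriv hgt y =
      v₁ * deriv d y + v₂ * (deriv Aa y + y)
        + v₃ * (6 * (y ^ 5 * W y) + y ^ 6 * deriv W y) := by
    intro y hy
    rw [derivCongrOn hIo hHeq hy]
    exact (HH1 y hy).deriv
  -- second derivative of hgt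
  have HH2 : ∀ y ∈ I, HasDerivAt
      (fun y => v₁ * deriv d y + v₂ * (deriv Aa y + y)
        + v₃ * (6 * (y ^ 5 * W y) + y ^ 6 * deriv W y))
      (v₁ * deriv (deriv d) y + v₂ * (deriv (deriv Aa) y + 1)
        + v₃ * (30 * (y ^ 4 * W y) + 12 * (y ^ 5 * deriv W y)
          + y ^ 6 * deriv (deriv W) y)) y := by
    intro y hy
    have h := (((hdAt hIo hds1 hy).const_mul v₁).add
      (((hdAt hIo hAas1 hy).add (hasDerivAt_id' y)).const_mul v₂)).add
      (((((hasDerivAt_pow 5 y).mul (hdAt hIo hWs hy)).const_mul 6).add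
        ((hasDerivAt_pow 6 y).mul (hdAt hIo hWs1 hy))).const_mul v₃)
    refine h.congr_deriv ?_
    push_cast
    ring
  have hgt2 : ∀ y ∈ I, deriv (deriv hgt) y =
      v₁ * deriv (deriv d) y + v₂ * (deriv (deriv Aa) y + 1)
        + v₃ * (30 * (y ^ 4 * W y) + 12 * (y ^ 5 * deriv W y)
          + y ^ 6 * deriv (deriv W) y) := by
    intro y hy
    rw [derivCongrOn hIo hgt1 hy]
    exact (HH2 y hy).deriv
  -- third derivative of hgt
  have HH3 : ∀ y ∈ I, HasDerivAt
      (fun y => v₁ * deriv (deriv d) y + v₂ * (deriv (deriv Aa) y + 1)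
        + v₃ * (30 * (y ^ 4 * W y) + 12 * (y ^ 5 * deriv W y)
          + y ^ 6 * deriv (deriv W) y))
      (v₁ * deriv (deriv (deriv d)) y + v₂ * deriv (deriv (deriv Aa)) y
        + v₃ * (120 * (y ^ 3 * W y) + 90 * (y ^ 4 * deriv W y)
          + 18 * (y ^ 5 * deriv (deriv W) y) + y ^ 6 * deriv (deriv (deriv W)) y)) y := by
    intro y hy
    have h := (((hdAt hIo hds2 hy).const_mul v₁).add
      (((hdAt hIo hAas2 hy).add (hasDerivAt_const y (1:ℝ))).const_mul v₂)).add
      ((((((hasDerivAt_pow 4 y).mul (hdAt hIo hWs hy)).const_mul 30).add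
        (((hasDerivAt_pow 5 y).mul (hdAt hIo hWs1 hy)).const_mul 12)).add
        ((hasDerivAt_pow 6 y).mul (hdAt hIo hWs2 hy))).const_mul v₃)
    refine h.congr_deriv ?_
    push_cast
    ring
  have hgt3 : ∀ y ∈ I, deriv (deriv (deriv hgt)) y =
      v₁ * deriv (deriv (deriv d)) y + v₂ * deriv (deriv (deriv Aa)) y
        + v₃ * (120 * (y ^ 3 * W y) + 90 * (y ^ 4 * deriv W y)
          + 18 * (y ^ 5 * deriv (deriv W) y) + y ^ 6 * deriv (deriv (deriv W)) y) := by
    intro y hy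
    rw [derivCongrOn hIo hgt2 hy]
    exact (HH3 y hy).deriv
  -- fourth derivative of hgt at 0
  have HH4 : HasDerivAt
      (fun y => v₁ * deriv (deriv (deriv d)) y + v₂ * deriv (deriv (deriv Aa)) y
        + v₃ * (120 * (y ^ 3 * W y) + 90 * (y ^ 4 * deriv W y)
          + 18 * (y ^ 5 * deriv (deriv W) y) + y ^ 6 * deriv (deriv (deriv W)) y))
      (v₁ * deriv (deriv (deriv (deriv d))) 0
        + v₂ * deriv (deriv (deriv (deriv Aa))) 0) 0 := by
    have h := (((hdAt hIo hds3 h0I).const_mul v₁).add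
      ((hdAt hIo hAas3 h0I).const_mul v₂)).add
      (((((((hasDerivAt_pow 3 0).mul (hdAt hIo hWs h0I)).const_mul 120).add
        (((hasDerivAt_pow 4 0).mul (hdAt hIo hWs1 h0I)).const_mul 90)).add
        (((hasDerivAt_pow 5 0).mul (hdAt hIo hWs2 h0I)).const_mul 18)).add
        ((hasDerivAt_pow 6 0).mul (hdAt hIo hWs3 h0I))).const_mul v₃)
    refine h.congr_deriv ?_
    push_cast
    ring
  have hgt4 : deriv (deriv (deriv (deriv hgt))) 0 =
      v₁ * deriv (deriv (deriv (deriv d))) 0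
        + v₂ * deriv (deriv (deriv (deriv Aa))) 0 := by
    rw [derivCongrOn hIo hgt3 h0I]
    exact HH4.deriv
  -- iterated derivatives in terms of deriv
  have it2 : iteratedDeriv 2 hgt = deriv (deriv hgt) := by
    rw [show (2:ℕ) = 1 + 1 from rfl, iteratedDeriv_succ, iteratedDeriv_one]
  have it3 : iteratedDeriv 3 hgt = deriv (deriv (deriv hgt)) := by
    rw [show (3:ℕ) = 1 + 1 + 1 from rfl, iteratedDeriv_succ, iteratedDeriv_succ,
      iteratedDeriv_one]
  have it4 : iteratedDeriv 4 hgt = deriv (deriv (deriv (deriv hgt))) := by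
    rw [show (4:ℕ) = 1 + 1 + 1 + 1 from rfl, iteratedDeriv_succ, iteratedDeriv_succ,
      iteratedDeriv_succ, iteratedDeriv_one]
  have ia2 : iteratedDeriv 2 a 0 = deriv (deriv a) 0 := by
    rw [show (2:ℕ) = 1 + 1 from rfl, iteratedDeriv_succ, iteratedDeriv_one]
  have ib2 : iteratedDeriv 2 b₀ 0 = deriv (deriv b₀) 0 := by
    rw [show (2:ℕ) = 1 + 1 from rfl, iteratedDeriv_succ, iteratedDeriv_one]
  -- conclusion 1 : h'(0) = 0
  have conc1 : deriv hgt 0 = 0 := by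
    have h := hgt1 0 h0I
    rw [hd10, hAa10] at h
    rw [h]; norm_num
  -- conclusion 2 : h''(0)
  have conc2 : deriv (deriv hgt) 0 = v₁ * deriv (deriv d) 0 + v₂ := by
    have h := hgt2 0 h0I
    rw [hAa20] at h
    rw [h]; norm_num
  -- conclusion 3 : h'''(0) = 0
  have conc3 : deriv (deriv (deriv hgt)) 0 = 0 := by
    have h := hgt3 0 h0I
    rw [hd30, hAa30] at h
    rw [h]; norm_num
  refine ⟨conc1, by rw [it3]; exact conc3, ?_, ?_⟩
  · rw [it2, conc2]
    field_simp
    linear_combination v₁ * e2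
  · intro h2z hv₁
    rw [it2, conc2] at h2z
    rw [it4, hgt4, hAa40, ia2, ib2]
    have key : deriv b₀ 0 ^ 3 * (v₁ * deriv (deriv (deriv (deriv d))) 0
        + v₂ * (3 * (deriv (deriv a) 0 * deriv (deriv d) 0 * deriv (deriv d) 0))) =
        -12 * v₁ * (2 * b₃ 0 0 * deriv b₀ 0 ^ 2
          - 2 * deriv b₀ 0 * deriv b₁ 0 * b₁ 0
          - 2 * b₁ 0 ^ 3 * deriv (deriv a) 0 + b₁ 0 ^ 2 * deriv (deriv b₀) 0) := by
      linear_combination (v₁ * deriv b₀ 0 ^ 2) * e4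
        + (3 * deriv (deriv a) 0 * deriv b₀ 0 ^ 3 * deriv (deriv d) 0 ^ 2) * h2z
        + (-(v₁ * (3 * deriv (deriv a) 0 * (deriv b₀ 0 ^ 2 * deriv (deriv d) 0 ^ 2
            - 2 * deriv b₀ 0 * deriv (deriv d) 0 * b₁ 0 + 4 * b₁ 0 ^ 2)
          + 3 * deriv (deriv b₀) 0 * (deriv b₀ 0 * deriv (deriv d) 0 - 2 * b₁ 0)
          + 12 * deriv b₁ 0 * deriv b₀ 0))) * e2
    constructor
    · intro hne hT
      apply hne
      rw [hT] at key
      have hβ3 : deriv b₀ 0 ^ 3 ≠ 0 := pow_ne_zero _ hb₀0'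
      have h0 : deriv b₀ 0 ^ 3 * (v₁ * deriv (deriv (deriv (deriv d))) 0
          + v₂ * (3 * (deriv (deriv a) 0 * deriv (deriv d) 0 * deriv (deriv d) 0))) = 0 := by
        rw [key]; ring
      have := (mul_eq_zero.mp h0).resolve_left hβ3
      linarith [this]
    · intro hT hzero
      rw [hzero, mul_zero] at key
      have h12 : (-12 : ℝ) * v₁ ≠ 0 := by
        intro h
        rcases mul_eq_zero.mp h with h | h
        · norm_num at h
        · exact hv₁ h
      rcases mul_eq_zero.mp key.symm with h | h
      · exact absurd h h12
      · exact hT h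
end

section
/- Fix b, c ∈ ℝ and define F : ℝ² × ℝ² → ℝ by F(x, y, a₁, a₂) = x² + b·xy² + xy³ + c·y⁴ + a₁x + a₂y². Then the discriminant set { (a₁, a₂, t) ∈ ℝ³ : there exist x, y ∈ ℝ with ∂F/∂x (x,y,a₁,a₂) = 0, ∂F/∂y (x,y,a₁,a₂) = 0 and t = F(x,y,a₁,a₂) } equals the union of the two parametrised sets { (−y³ − 2x − by², −(3/2)xy − bx − 2cy², −(3/2)xy³ − x² − bxy² − cy⁴) : x, y ∈ ℝ } and { (−2x, s, −x²) : x, s ∈ ℝ }. -/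
lemma aux_dx (k m x : ℝ) :
    deriv (fun x' : ℝ => x' ^ 2 + k * x' + m) x = 2 * x + k := by
  have h1 : HasDerivAt (fun x' : ℝ => x' ^ 2) (2 * x) x := by
    simpa using hasDerivAt_pow 2 x
  have h2 : HasDerivAt (fun x' : ℝ => k * x') k x := by
    simpa using (hasDerivAt_id x).const_mul k
  exact ((h1.add h2).add_const m).deriv

lemma aux_dy (p q r m y : ℝ) :
    deriv (fun y' : ℝ => p * y' ^ 2 + q * y' ^ 3 + r * y' ^ 4 + m) y
      = 2 * p * y + 3 * q * y ^ 2 + 4 * r * y ^ 3 := by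
  have h2 : HasDerivAt (fun y' : ℝ => p * y' ^ 2) (2 * p * y) y := by
    have := (hasDerivAt_pow 2 y).const_mul p
    exact this.congr_deriv (by push_cast; ring)
  have h3 : HasDerivAt (fun y' : ℝ => q * y' ^ 3) (3 * q * y ^ 2) y := by
    have := (hasDerivAt_pow 3 y).const_mul q
    exact this.congr_deriv (by push_cast; ring)
  have h4 : HasDerivAt (fun y' : ℝ => r * y' ^ 4) (4 * r * y ^ 3) y := by
    have := (hasDerivAt_pow 4 y).const_mul r
    exact this.congr_deriv (by push_cast; ring)
  exact (((h2.add h3).add h4).add_const m).deriv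

/-- For fixed `b, c ∈ ℝ` and
`F(x,y,a₁,a₂) = x² + bxy² + xy³ + cy⁴ + a₁x + a₂y²` (the versal deformation of the
contact of the cuspidal cross-cap with its tangent cone, composed with the
parametrisation `(x,y) ↦ (x, y², xy³)`), the discriminant
`{(a₁,a₂,t) : ∃ x y, F_x = F_y = 0, t = F(x,y,a₁,a₂)}` is the union of the cuspidal
cross-cap `{(−y³−2x−by², −(3/2)xy−bx−2cy², −(3/2)xy³−x²−bxy²−cy⁴)}` and the plane
`{(−2x, s, −x²)}`. -/
theorem stmt17 (b c : ℝ) (F : ℝ → ℝ → ℝ → ℝ → ℝ)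
    (hF : ∀ x y a₁ a₂, F x y a₁ a₂ =
      x ^ 2 + b * x * y ^ 2 + x * y ^ 3 + c * y ^ 4 + a₁ * x + a₂ * y ^ 2) :
    {p : ℝ × ℝ × ℝ | ∃ x y : ℝ,
        deriv (fun x' => F x' y p.1 p.2.1) x = 0 ∧
        deriv (fun y' => F x y' p.1 p.2.1) y = 0 ∧
        p.2.2 = F x y p.1 p.2.1} =
      {p : ℝ × ℝ × ℝ | ∃ x y : ℝ,
          p = (-y ^ 3 - 2 * x - b * y ^ 2,
               -(3 / 2) * x * y - b * x - 2 * c * y ^ 2,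
               -(3 / 2) * x * y ^ 3 - x ^ 2 - b * x * y ^ 2 - c * y ^ 4)} ∪
      {p : ℝ × ℝ × ℝ | ∃ x s : ℝ, p = (-2 * x, s, -x ^ 2)} := by
  ext ⟨a₁, a₂, t⟩
  simp only [Set.mem_setOf_eq, Set.mem_union]
  constructor
  · rintro ⟨x, y, h1, h2, h3⟩
    simp only [hF] at h1 h2 h3
    rw [show (fun x' : ℝ => x' ^ 2 + b * x' * y ^ 2 + x' * y ^ 3 + c * y ^ 4 + a₁ * x'
          + a₂ * y ^ 2)
        = (fun x' : ℝ => x' ^ 2 + (b * y ^ 2 + y ^ 3 + a₁) * x'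
          + (c * y ^ 4 + a₂ * y ^ 2)) from funext fun x' => by ring, aux_dx] at h1
    rw [show (fun y' : ℝ => x ^ 2 + b * x * y' ^ 2 + x * y' ^ 3 + c * y' ^ 4 + a₁ * x
          + a₂ * y' ^ 2)
        = (fun y' : ℝ => (b * x + a₂) * y' ^ 2 + x * y' ^ 3 + c * y' ^ 4
          + (x ^ 2 + a₁ * x)) from funext fun y' => by ring, aux_dy] at h2
    by_cases hy : y = 0
    · subst hy
      right
      have ha : a₁ = -2 * x := by linarith
      subst ha; subst h3
      exact ⟨x, a₂, by rw [Prod.mk.injEq, Prod.mk.injEq]; exact ⟨rfl, rfl, by ring⟩⟩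
    · left
      refine ⟨x, y, ?_⟩
      have h2' : 2 * (b * x + a₂) + 3 * x * y + 4 * c * y ^ 2 = 0 := by
        have : y * (2 * (b * x + a₂) + 3 * x * y + 4 * c * y ^ 2) = 0 := by
          rw [← h2]; ring
        rcases mul_eq_zero.1 this with h | h
        · exact absurd h hy
        · exact h
      have ea₁ : a₁ = -y ^ 3 - 2 * x - b * y ^ 2 := by linarith
      have ea₂ : a₂ = -(3 / 2) * x * y - b * x - 2 * c * y ^ 2 := by linarith
      simp only [Prod.mk.injEq]
      refine ⟨ea₁, ea₂, ?_⟩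
      rw [h3, ea₁, ea₂]; ring
  · rintro (⟨x, y, hp⟩ | ⟨x, s, hp⟩) <;>
      simp only [Prod.mk.injEq] at hp <;> obtain ⟨rfl, rfl, rfl⟩ := hp
    · refine ⟨x, y, ?_, ?_, ?_⟩
      · simp only [hF]
        rw [show (fun x' : ℝ => x' ^ 2 + b * x' * y ^ 2 + x' * y ^ 3 + c * y ^ 4
              + (-y ^ 3 - 2 * x - b * y ^ 2) * x'
              + (-(3 / 2) * x * y - b * x - 2 * c * y ^ 2) * y ^ 2)
            = (fun x' : ℝ => x' ^ 2 + (b * y ^ 2 + y ^ 3 + (-y ^ 3 - 2 * x - b * y ^ 2)) * x'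
              + (c * y ^ 4 + (-(3 / 2) * x * y - b * x - 2 * c * y ^ 2) * y ^ 2)) from
            funext fun x' => by ring, aux_dx]
        ring
      · simp only [hF]
        rw [show (fun y' : ℝ => x ^ 2 + b * x * y' ^ 2 + x * y' ^ 3 + c * y' ^ 4
              + (-y ^ 3 - 2 * x - b * y ^ 2) * x
              + (-(3 / 2) * x * y - b * x - 2 * c * y ^ 2) * y' ^ 2)
            = (fun y' : ℝ => (b * x + (-(3 / 2) * x * y - b * x - 2 * c * y ^ 2)) * y' ^ 2
              + x * y' ^ 3 + c * y' ^ 4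
              + (x ^ 2 + (-y ^ 3 - 2 * x - b * y ^ 2) * x)) from
            funext fun y' => by ring, aux_dy]
        ring
      · rw [hF]; ring
    · refine ⟨x, 0, ?_, ?_, ?_⟩
      · simp only [hF]
        rw [show (fun x' : ℝ => x' ^ 2 + b * x' * (0:ℝ) ^ 2 + x' * (0:ℝ) ^ 3 + c * (0:ℝ) ^ 4
              + (-2 * x) * x' + a₂ * (0:ℝ) ^ 2)
            = (fun x' : ℝ => x' ^ 2 + (-2 * x) * x' + (0:ℝ)) from
            funext fun x' => by ring, aux_dx]
        ring
      · simp only [hF]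
        rw [show (fun y' : ℝ => x ^ 2 + b * x * y' ^ 2 + x * y' ^ 3 + c * y' ^ 4
              + (-2 * x) * x + a₂ * y' ^ 2)
            = (fun y' : ℝ => (b * x + a₂) * y' ^ 2 + x * y' ^ 3 + c * y' ^ 4
              + (x ^ 2 + (-2 * x) * x)) from funext fun y' => by ring, aux_dy]
        ring
      · rw [hF]; ring
end

section
/- Define H : ℝ × ℝ² → ℝ by H(y, a₁, a₂) = y⁶ + a₁y² + a₂y⁴. Then the set { (a₁, a₂, t) ∈ ℝ³ : there exists y ∈ ℝ with ∂H/∂y (y, a₁, a₂) = 0 and t = H(y, a₁, a₂) } equals the union of the plane { (a₁, a₂, 0) : a₁, a₂ ∈ ℝ } and the parametrised set { (−3y⁴ − 2a₂y², a₂, −2y⁶ − a₂y⁴) : y, a₂ ∈ ℝ }. -/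
lemma dcalc (a b y : ℝ) :
    deriv (fun y' : ℝ => y' ^ 6 + a * y' ^ 2 + b * y' ^ 4) y
      = 6 * y ^ 5 + a * (2 * y) + b * (4 * y ^ 3) := by
  have h1 : HasDerivAt (fun y' : ℝ => y' ^ 6 + a * y' ^ 2 + b * y' ^ 4)
      (6 * y ^ 5 + a * (2 * y) + b * (4 * y ^ 3)) y := by
    have := (((hasDerivAt_pow 6 y).add
      (((hasDerivAt_pow 2 y).const_mul a))).add
      ((hasDerivAt_pow 4 y).const_mul b))
    refine this.congr_deriv ?_
    norm_num
  exact h1.deriv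

/-- For `H(y, a₁, a₂) = y⁶ + a₁y² + a₂y⁴` (the restriction to the double
point curve of the versal deformation of the submersion `u + v³`), the discriminant
`{(a₁,a₂,t) : ∃ y, ∂H/∂y = 0, t = H(y,a₁,a₂)}` is the union of the plane
`{(a₁, a₂, 0)}` and the set `{(−3y⁴ − 2a₂y², a₂, −2y⁶ − a₂y⁴)}`. -/
theorem stmt19 (H : ℝ → ℝ → ℝ → ℝ)
    (hH : ∀ y a₁ a₂, H y a₁ a₂ = y ^ 6 + a₁ * y ^ 2 + a₂ * y ^ 4) :
    {p : ℝ × ℝ × ℝ | ∃ y : ℝ,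
        deriv (fun y' => H y' p.1 p.2.1) y = 0 ∧ p.2.2 = H y p.1 p.2.1} =
      {p : ℝ × ℝ × ℝ | ∃ a₁ a₂ : ℝ, p = (a₁, a₂, 0)} ∪
      {p : ℝ × ℝ × ℝ | ∃ y a₂ : ℝ,
          p = (-3 * y ^ 4 - 2 * a₂ * y ^ 2, a₂, -2 * y ^ 6 - a₂ * y ^ 4)} := by
  ext ⟨a₁, a₂, t⟩
  simp only [Set.mem_setOf_eq, Set.mem_union, hH, dcalc, Prod.mk.injEq]
  constructor
  · rintro ⟨y, hd, ht⟩
    rcases eq_or_ne y 0 with rfl | hy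
    · left; exact ⟨a₁, a₂, rfl, rfl, by simpa using ht⟩
    · right
      refine ⟨y, a₂, ?_, rfl, ?_⟩
      · have h2 : 2 * y * (a₁ - (-3 * y ^ 4 - 2 * a₂ * y ^ 2)) = 0 := by ring_nf; linarith [hd]
        have := mul_eq_zero.mp h2
        rcases this with h | h
        · exact absurd (by linarith : y = 0) hy
        · linarith
      · have h2 : 2 * y * (a₁ - (-3 * y ^ 4 - 2 * a₂ * y ^ 2)) = 0 := by ring_nf; linarith [hd]
        rcases mul_eq_zero.mp h2 with h | h
        · exact absurd (by linarith : y = 0) hy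
        · have ha : a₁ = -3 * y ^ 4 - 2 * a₂ * y ^ 2 := by linarith
          rw [ht, ha]; ring
  · rintro (⟨b₁, b₂, rfl, rfl, rfl⟩ | ⟨y, b₂, rfl, rfl, rfl⟩)
    · exact ⟨0, by norm_num⟩
    · exact ⟨y, by ring, by ring⟩
end
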